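/- arXiv:2104.03744 — 4 statements merged into one kernel-verified Lean document; each statement's English description precedes it below -/
import Mathlib

section
/- Let (X, d) be a locally compact, separable metric space equipped with a σ-finite Borel regular measure 𝔪, and let f ∈ L¹([0,1] × X) with respect to the product of Lebesgue measure on [0,1] and 𝔪. Then for every ε > 0 there exists a Borel set E ⊆ X with 𝔪(X \ E) < ε such that, for every t ∈ [0,1], the function x ↦ ∫₀ᵗ f(r, x) dr, restricted to E, is continuous on E. -/
open MeasureTheory Set
open scoped ENNReal NNReal Topology

/-- Lusin-type theorem for a single integrable function. -/
lemma lusin_single {X : Type*} [MetricSpace X] [MeasurableSpace X] [BorelSpace X]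
    (𝔪 : Measure X) [𝔪.WeaklyRegular] {u : X → ℝ} (hu : Integrable u 𝔪)
    {δ : ℝ≥0∞} (hδ : δ ≠ 0) :
    ∃ E : Set X, MeasurableSet E ∧ 𝔪 Eᶜ ≤ δ ∧ ContinuousOn u E := by
  set u' := hu.aestronglyMeasurable.mk u with hu'def
  have hu'sm : StronglyMeasurable u' := hu.aestronglyMeasurable.stronglyMeasurable_mk
  have huu' : u =ᵐ[𝔪] u' := hu.aestronglyMeasurable.ae_eq_mk
  set N := toMeasurable 𝔪 {x | u x ≠ u' x} with hNdef
  have hN : 𝔪 N = 0 := by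
    rw [measure_toMeasurable]
    exact huu'
  -- choose bounded continuous approximations
  have hεn : ∀ n : ℕ, ENNReal.ofReal ((2:ℝ)⁻¹ ^ n) * (δ / 2 / 2 ^ n) ≠ 0 := by
    intro n
    apply mul_ne_zero
    · simp [ENNReal.ofReal_eq_zero, not_le]
    · simp only [ne_eq, ENNReal.div_eq_zero_iff, not_or]
      refine ⟨⟨hδ, by norm_num⟩, ?_⟩
      exact ENNReal.pow_ne_top (by norm_num)
  choose g hg hgint using fun n : ℕ =>
    hu.exists_boundedContinuous_lintegral_sub_le (μ := 𝔪) (hεn n)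
  set B : ℕ → Set X := fun n => {x | (2:ℝ)⁻¹ ^ n ≤ |u' x - g n x|} with hBdef
  have hBmeas : ∀ n, MeasurableSet (B n) := by
    intro n
    exact measurableSet_le measurable_const
      ((hu'sm.measurable.sub (g n).continuous.measurable).abs)
  have hB : ∀ n, 𝔪 (B n) ≤ δ / 2 / 2 ^ n := by
    intro n
    have hmeas : AEMeasurable (fun x => ENNReal.ofReal |u' x - g n x|) 𝔪 :=
      (ENNReal.measurable_ofReal.comp
        ((hu'sm.measurable.sub (g n).continuous.measurable).abs)).aemeasurable
    have markov := mul_meas_ge_le_lintegral₀ hmeas (ENNReal.ofReal ((2:ℝ)⁻¹ ^ n))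
    have hset : {x | ENNReal.ofReal ((2:ℝ)⁻¹ ^ n) ≤ ENNReal.ofReal |u' x - g n x|} = B n := by
      ext x
      simp only [mem_setOf_eq, hBdef]
      exact ENNReal.ofReal_le_ofReal_iff (abs_nonneg _)
    rw [hset] at markov
    have hlint : (∫⁻ x, ENNReal.ofReal |u' x - g n x| ∂𝔪)
        = ∫⁻ x, (‖u x - g n x‖₊ : ℝ≥0∞) ∂𝔪 := by
      refine lintegral_congr_ae ?_
      filter_upwards [huu'] with x hx
      rw [hx]; exact (Real.enorm_eq_ofReal_abs _).symm
    have hle : ENNReal.ofReal ((2:ℝ)⁻¹ ^ n) * 𝔪 (B n)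
        ≤ ENNReal.ofReal ((2:ℝ)⁻¹ ^ n) * (δ / 2 / 2 ^ n) :=
      markov.trans (by rw [hlint]; exact hg n)
    have h0 : ENNReal.ofReal ((2:ℝ)⁻¹ ^ n) ≠ 0 := by
      simp [ENNReal.ofReal_eq_zero, not_le]
    exact (ENNReal.mul_le_mul_iff_right h0 ENNReal.ofReal_ne_top).1 hle
  refine ⟨Nᶜ ∩ ⋂ n, (B n)ᶜ, ?_, ?_, ?_⟩
  · exact (measurableSet_toMeasurable _ _).compl.inter
      (MeasurableSet.iInter fun n => (hBmeas n).compl)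
  · have hEc : (Nᶜ ∩ ⋂ n, (B n)ᶜ)ᶜ = N ∪ ⋃ n, B n := by
      simp [compl_inter, compl_iInter]
    rw [hEc]
    calc 𝔪 (N ∪ ⋃ n, B n) ≤ 𝔪 N + 𝔪 (⋃ n, B n) := measure_union_le _ _
      _ ≤ 0 + ∑' n, 𝔪 (B n) := by rw [hN]; exact add_le_add le_rfl (measure_iUnion_le _)
      _ ≤ ∑' n : ℕ, δ / 2 / 2 ^ n := by rw [zero_add]; exact ENNReal.tsum_le_tsum hB
      _ = δ := by
          have : ∀ n : ℕ, δ / 2 / 2 ^ n = δ / 2 * (2:ℝ≥0∞)⁻¹ ^ n := by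
            intro n
            rw [div_eq_mul_inv, ENNReal.inv_pow]
          simp_rw [this]
          rw [ENNReal.tsum_mul_left, ENNReal.tsum_geometric]
          rw [ENNReal.one_sub_inv_two, inv_inv]
          exact ENNReal.div_mul_cancel (by norm_num) (by norm_num)
  · -- uniform convergence on E
    have huni : TendstoUniformlyOn (fun n x => g n x) u Filter.atTop (Nᶜ ∩ ⋂ n, (B n)ᶜ) := by
      rw [Metric.tendstoUniformlyOn_iff]
      intro ε hε
      obtain ⟨n₀, hn₀⟩ := exists_pow_lt_of_lt_one hε (by norm_num : (2:ℝ)⁻¹ < 1)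
      filter_upwards [Filter.eventually_ge_atTop n₀] with n hn x hx
      have hxN : u x = u' x := by
        by_contra h
        exact hx.1 (subset_toMeasurable _ _ h)
      have hxB : x ∉ B n := by
        have := hx.2
        simp only [mem_iInter, mem_compl_iff] at this
        exact this n
      have hlt : |u' x - g n x| < (2:ℝ)⁻¹ ^ n := not_le.1 hxB
      rw [Real.dist_eq, hxN]
      calc |u' x - g n x| < (2:ℝ)⁻¹ ^ n := hlt
        _ ≤ (2:ℝ)⁻¹ ^ n₀ := by
            apply pow_le_pow_of_le_one (by norm_num) (by norm_num) hn
        _ < ε := hn₀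
    exact huni.continuousOn
      (Filter.Eventually.of_forall fun n => (g n).continuous.continuousOn).frequently

lemma integrable_primitive_aux {X : Type*} [MeasurableSpace X]
    (𝔪 : Measure X) [SigmaFinite 𝔪] (F : ℝ × X → ℝ)
    (hF : Integrable F ((volume.restrict (Icc (0:ℝ) 1)).prod 𝔪)) {t : ℝ}
    (ht : t ∈ Icc (0:ℝ) 1) :
    Integrable (fun x => ∫ r in (0:ℝ)..t, F (r, x)) 𝔪 := by
  have hsub : Ioc (0:ℝ) t ⊆ Icc (0:ℝ) 1 :=
    Ioc_subset_Icc_self.trans (Icc_subset_Icc le_rfl ht.2)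
  have h1 : (volume.restrict (Icc (0:ℝ) 1)).restrict (Ioc 0 t) = volume.restrict (Ioc 0 t) := by
    rw [Measure.restrict_restrict measurableSet_Ioc, inter_eq_left.2 hsub]
  have h2 : Integrable F ((volume.restrict (Ioc (0:ℝ) t)).prod 𝔪) := by
    have h3 := hF.restrict (s := Ioc (0:ℝ) t ×ˢ univ)
    rw [← Measure.prod_restrict, Measure.restrict_univ, h1] at h3
    exact h3
  have h4 := h2.integral_prod_right
  refine h4.congr (Filter.Eventually.of_forall fun x => ?_)
  simp only []
  rw [intervalIntegral.integral_of_le ht.1]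

lemma aux_ii {g : ℝ → ℝ} (hg : IntegrableOn g (Icc (0:ℝ) 1) volume) {a b : ℝ}
    (h0 : 0 ≤ a) (hab : a ≤ b) (hb1 : b ≤ 1) : IntervalIntegrable g volume a b := by
  apply IntegrableOn.intervalIntegrable
  apply hg.mono_set
  rw [uIcc_of_le hab]
  exact Icc_subset_Icc h0 hb1

lemma tsum_half_geom (δ : ℝ≥0∞) : ∑' n : ℕ, δ / 2 / 2 ^ n = δ := by
  have h : ∀ n : ℕ, δ / 2 / 2 ^ n = δ / 2 * (2:ℝ≥0∞)⁻¹ ^ n := fun n => by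
    rw [div_eq_mul_inv, ENNReal.inv_pow]
  simp_rw [h]
  rw [ENNReal.tsum_mul_left, ENNReal.tsum_geometric, ENNReal.one_sub_inv_two, inv_inv]
  exact ENNReal.div_mul_cancel (by norm_num) (by norm_num)

/-- **Lusin-type continuity of time integrals** (Lemma 5.1 of the paper).
Let `(X, d)` be a locally compact, separable metric space equipped with a σ-finite
Borel regular measure `𝔪`, and let `f ∈ L¹([0,1] × X)` (with respect to the product
of Lebesgue measure on `[0,1]` and `𝔪`).  Then for every `ε > 0` there exists a Borel
set `E ⊆ X` with `𝔪(X \ E) < ε` such that, for every `t ∈ [0,1]`, the function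
`x ↦ ∫₀ᵗ f(r, x) dr`, restricted to `E`, is continuous on `E`. -/
theorem lusin_continuity_of_time_integral
    {X : Type*} [MetricSpace X] [LocallyCompactSpace X]
    [TopologicalSpace.SeparableSpace X]
    [MeasurableSpace X] [BorelSpace X]
    (𝔪 : Measure X) [SigmaFinite 𝔪] [𝔪.WeaklyRegular]
    (f : ℝ × X → ℝ)
    (hf : Integrable f ((volume.restrict (Icc (0:ℝ) 1)).prod 𝔪)) :
    ∀ ε : ℝ, 0 < ε →
      ∃ E : Set X, MeasurableSet E ∧ 𝔪 Eᶜ < ENNReal.ofReal ε ∧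
        ∀ t ∈ Icc (0:ℝ) 1,
          ContinuousOn (fun x => ∫ r in (0:ℝ)..t, f (r, x)) E := by
  intro ε hε
  set μ := volume.restrict (Icc (0:ℝ) 1) with hμdef
  -- bad fibers
  have hfib : ∀ᵐ x ∂𝔪, Integrable (fun r => f (r, x)) μ := hf.prod_left_ae
  set S := {x : X | ¬ Integrable (fun r => f (r, x)) μ} with hSdef
  have hSnull : 𝔪 (toMeasurable 𝔪 S) = 0 := by
    rw [measure_toMeasurable]; exact hfib
  -- clamped rationals
  set tq : ℚ → ℝ := fun q => max 0 (min (q:ℝ) 1) with htqdef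
  have htq0 : ∀ q, tq q ∈ Icc (0:ℝ) 1 := fun q =>
    ⟨le_max_left _ _, max_le (by norm_num) (min_le_right _ _)⟩
  -- the countable family of functions
  set G : ℚ → X → ℝ := fun q x => ∫ r in (0:ℝ)..(tq q), f (r, x) with hGdef
  set H : ℚ → X → ℝ := fun q x => ∫ r in (0:ℝ)..(tq q), |f (r, x)| with hHdef
  have hGint : ∀ q, Integrable (G q) 𝔪 := fun q =>
    integrable_primitive_aux 𝔪 f hf (htq0 q)
  have habs : Integrable (fun p : ℝ × X => |f p|) (μ.prod 𝔪) := hf.abs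
  have hHint : ∀ q, Integrable (H q) 𝔪 := fun q =>
    integrable_primitive_aux 𝔪 (fun p => |f p|) habs (htq0 q)
  -- budget
  set δ : ℝ≥0∞ := ENNReal.ofReal ε / 2 / 2 with hδdef
  have hε0 : ENNReal.ofReal ε ≠ 0 := by simp [ENNReal.ofReal_eq_zero, not_le, hε]
  have hδ0 : δ ≠ 0 := by
    simp only [hδdef, ne_eq, ENNReal.div_eq_zero_iff, not_or]
    exact ⟨⟨hε0, by norm_num⟩, by norm_num⟩
  set e : ℚ ≃ ℕ := Denumerable.eqv ℚ with hedef
  have hδn : ∀ q : ℚ, δ / 2 / 2 ^ (e q) ≠ 0 := by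
    intro q h
    rcases ENNReal.div_eq_zero_iff.1 h with h' | h'
    · rcases ENNReal.div_eq_zero_iff.1 h' with h'' | h''
      · exact hδ0 h''
      · exact ENNReal.ofNat_ne_top h''
    · exact ENNReal.pow_ne_top ENNReal.ofNat_ne_top h'
  choose E₁ hE₁m hE₁c hE₁cont using fun q : ℚ => lusin_single 𝔪 (hGint q) (hδn q)
  choose E₂ hE₂m hE₂c hE₂cont using fun q : ℚ => lusin_single 𝔪 (hHint q) (hδn q)
  set E : Set X := (toMeasurable 𝔪 S)ᶜ ∩ ⋂ q : ℚ, (E₁ q ∩ E₂ q) with hEdef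
  have hEint : ∀ x ∈ E, Integrable (fun r => f (r, x)) μ := by
    intro x hx
    by_contra h
    exact hx.1 (subset_toMeasurable _ _ h)
  have hEsub₁ : ∀ q, E ⊆ E₁ q := fun q x hx => (mem_iInter.1 hx.2 q).1
  have hEsub₂ : ∀ q, E ⊆ E₂ q := fun q x hx => (mem_iInter.1 hx.2 q).2
  refine ⟨E, ?_, ?_, ?_⟩
  · exact (measurableSet_toMeasurable _ _).compl.inter
      (MeasurableSet.iInter fun q => (hE₁m q).inter (hE₂m q))
  · have hEc : Eᶜ = toMeasurable 𝔪 S ∪ ⋃ q : ℚ, ((E₁ q)ᶜ ∪ (E₂ q)ᶜ) := by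
      simp [hEdef, compl_inter, compl_iInter]
    rw [hEc]
    have hsum : ∀ q : ℚ, 𝔪 ((E₁ q)ᶜ ∪ (E₂ q)ᶜ) ≤ δ / 2 / 2 ^ (e q) + δ / 2 / 2 ^ (e q) :=
      fun q => (measure_union_le _ _).trans (add_le_add (hE₁c q) (hE₂c q))
    have htsum : ∑' q : ℚ, (δ / 2 / 2 ^ (e q) + δ / 2 / 2 ^ (e q)) = δ + δ := by
      rw [ENNReal.tsum_add]
      have h1 : ∑' q : ℚ, δ / 2 / 2 ^ (e q) = δ := by
        rw [e.tsum_eq (fun n => δ / 2 / 2 ^ n)]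
        exact tsum_half_geom δ
      rw [h1]
    calc 𝔪 (toMeasurable 𝔪 S ∪ ⋃ q : ℚ, ((E₁ q)ᶜ ∪ (E₂ q)ᶜ))
        ≤ 𝔪 (toMeasurable 𝔪 S) + 𝔪 (⋃ q : ℚ, ((E₁ q)ᶜ ∪ (E₂ q)ᶜ)) := measure_union_le _ _
      _ ≤ 0 + ∑' q : ℚ, 𝔪 ((E₁ q)ᶜ ∪ (E₂ q)ᶜ) := by
          rw [hSnull]; exact add_le_add le_rfl (measure_iUnion_le _)
      _ ≤ ∑' q : ℚ, (δ / 2 / 2 ^ (e q) + δ / 2 / 2 ^ (e q)) := by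
          rw [zero_add]; exact ENNReal.tsum_le_tsum hsum
      _ = δ + δ := htsum
      _ = ENNReal.ofReal ε / 2 := by rw [hδdef, ENNReal.add_halves]
      _ < ENNReal.ofReal ε := ENNReal.half_lt_self hε0 ENNReal.ofReal_ne_top
  · -- continuity
    intro t ht x₀ hx₀
    have hx₀int : IntegrableOn (fun r => f (r, x₀)) (Icc (0:ℝ) 1) volume := hEint x₀ hx₀
    have hx₀abs : IntegrableOn (fun r => |f (r, x₀)|) (Icc (0:ℝ) 1) volume := hx₀int.abs
    rw [Metric.continuousWithinAt_iff]
    intro ε' hε'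
    -- primitive of |f(·,x₀)| is continuous
    set ψ : ℝ → ℝ := fun s => ∫ r in (0:ℝ)..s, |f (r, x₀)| with hψdef
    have hψcont : ContinuousOn ψ (Icc (0:ℝ) 1) := by
      have := intervalIntegral.continuousOn_primitive_interval
        (a := (0:ℝ)) (b := 1) (μ := volume) (f := fun r => |f (r, x₀)|)
        (by rw [uIcc_of_le (zero_le_one)]; exact hx₀abs)
      rwa [uIcc_of_le (zero_le_one)] at this
    obtain ⟨δ₀, hδ₀pos, hδ₀⟩ := Metric.continuousWithinAt_iff.1 (hψcont t ht) (ε' / 16)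
      (by positivity)
    -- choose rationals around t
    obtain ⟨q₁, hq₁l, hq₁r⟩ := exists_rat_btwn (show t - δ₀ < t by linarith)
    obtain ⟨q₂, hq₂l, hq₂r⟩ := exists_rat_btwn (show t < t + δ₀ by linarith)
    set a := tq q₁ with hadef
    set b := tq q₂ with hbdef
    have ha1 : a ∈ Icc (0:ℝ) 1 := htq0 q₁
    have hb1 : b ∈ Icc (0:ℝ) 1 := htq0 q₂
    have hat : a ≤ t := by
      apply max_le ht.1
      exact le_trans (min_le_left _ _) hq₁r.le
    have hta : t - δ₀ < a := by
      have h1 : min (q₁:ℝ) 1 = (q₁:ℝ) := min_eq_left (le_trans hq₁r.le ht.2)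
      rw [hadef, htqdef]
      simp only [h1]
      exact lt_of_lt_of_le hq₁l (le_max_right _ _)
    have htb : t ≤ b := by
      rw [hbdef, htqdef]
      refine le_trans (le_min hq₂l.le ht.2) (le_max_right _ _)
    have hbt : b < t + δ₀ := by
      rw [hbdef, htqdef]
      apply max_lt (by linarith [ht.1])
      exact lt_of_le_of_lt (min_le_left _ _) hq₂r
    have hab : a ≤ b := le_trans hat htb
    -- distances to t are < δ₀
    have hda : dist a t < δ₀ := by rw [Real.dist_eq, abs_sub_lt_iff]; constructor <;> linarith
    have hdb : dist b t < δ₀ := by rw [Real.dist_eq, abs_sub_lt_iff]; constructor <;> linarith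
    have hgap : ψ b - ψ a < ε' / 8 := by
      have h1 := hδ₀ ha1 hda
      have h2 := hδ₀ hb1 hdb
      rw [Real.dist_eq] at h1 h2
      have := abs_sub_lt_iff.1 h1
      have := abs_sub_lt_iff.1 h2
      cases abs_sub_lt_iff.1 h1 with
      | intro u v => cases abs_sub_lt_iff.1 h2 with
        | intro u' v' => linarith
    -- continuity of G q₁, H q₁, H q₂ at x₀ within E
    obtain ⟨δ₁, hδ₁pos, hδ₁⟩ := Metric.continuousWithinAt_iff.1
      (((hE₁cont q₁) x₀ (hEsub₁ q₁ hx₀)).mono (hEsub₁ q₁)) (ε' / 8) (by positivity)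
    obtain ⟨δ₂, hδ₂pos, hδ₂⟩ := Metric.continuousWithinAt_iff.1
      (((hE₂cont q₁) x₀ (hEsub₂ q₁ hx₀)).mono (hEsub₂ q₁)) (ε' / 8) (by positivity)
    obtain ⟨δ₃, hδ₃pos, hδ₃⟩ := Metric.continuousWithinAt_iff.1
      (((hE₂cont q₂) x₀ (hEsub₂ q₂ hx₀)).mono (hEsub₂ q₂)) (ε' / 8) (by positivity)
    refine ⟨min δ₁ (min δ₂ δ₃), by positivity, fun x hx hdx => ?_⟩
    have hd₁ : dist x x₀ < δ₁ := lt_of_lt_of_le hdx (min_le_left _ _)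
    have hd₂ : dist x x₀ < δ₂ :=
      lt_of_lt_of_le hdx ((min_le_right _ _).trans (min_le_left _ _))
    have hd₃ : dist x x₀ < δ₃ :=
      lt_of_lt_of_le hdx ((min_le_right _ _).trans (min_le_right _ _))
    have hGq₁ := hδ₁ hx hd₁
    have hHq₁ := hδ₂ hx hd₂
    have hHq₂ := hδ₃ hx hd₃
    rw [Real.dist_eq] at hGq₁ hHq₁ hHq₂ ⊢
    have hxint : IntegrableOn (fun r => f (r, x)) (Icc (0:ℝ) 1) volume := hEint x hx
    have hxabs : IntegrableOn (fun r => |f (r, x)|) (Icc (0:ℝ) 1) volume := hxint.abs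
    -- splitting identities
    have hsplit : ∀ y : X, IntegrableOn (fun r => f (r, y)) (Icc (0:ℝ) 1) volume →
        (∫ r in (0:ℝ)..t, f (r, y)) - G q₁ y = ∫ r in a..t, f (r, y) := by
      intro y hy
      have h := intervalIntegral.integral_add_adjacent_intervals
        (aux_ii hy le_rfl ha1.1 ha1.2 : IntervalIntegrable _ volume 0 a)
        (aux_ii hy ha1.1 hat ht.2)
      simp only [hGdef]
      linarith [h]
    have habs_split : ∀ y : X, IntegrableOn (fun r => |f (r, y)|) (Icc (0:ℝ) 1) volume →
        H q₂ y - H q₁ y = ∫ r in a..b, |f (r, y)| := by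
      intro y hy
      have h := intervalIntegral.integral_add_adjacent_intervals
        (aux_ii hy le_rfl ha1.1 ha1.2 : IntervalIntegrable _ volume 0 a)
        (aux_ii hy ha1.1 hab hb1.2)
      simp only [hHdef]
      linarith [h]
    have htail : ∀ y : X, IntegrableOn (fun r => f (r, y)) (Icc (0:ℝ) 1) volume →
        |∫ r in a..t, f (r, y)| ≤ H q₂ y - H q₁ y := by
      intro y hy
      rw [habs_split y hy.abs]
      calc |∫ r in a..t, f (r, y)| ≤ ∫ r in a..t, |f (r, y)| :=
            intervalIntegral.abs_integral_le_integral_abs hat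
        _ ≤ ∫ r in a..b, |f (r, y)| := by
            apply intervalIntegral.integral_mono_interval le_rfl hat htb
              (Filter.Eventually.of_forall fun r => abs_nonneg _)
              (aux_ii hy.abs ha1.1 hab hb1.2)
    have key₁ := hsplit x hxint
    have key₀ := hsplit x₀ hx₀int
    have hψab : H q₂ x₀ - H q₁ x₀ = ψ b - ψ a := by
      simp only [hHdef, hψdef]
      rfl
    have hT₁ : |∫ r in a..t, f (r, x)| < 3 * (ε' / 8) := by
      refine lt_of_le_of_lt (htail x hxint) ?_
      have h₁ := abs_lt.1 hHq₁
      have h₂ := abs_lt.1 hHq₂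
      have h₃ : H q₂ x₀ - H q₁ x₀ < ε' / 8 := by rw [hψab]; linarith
      linarith [h₁.1, h₁.2, h₂.1, h₂.2]
    have hT₀ : |∫ r in a..t, f (r, x₀)| < ε' / 8 := by
      refine lt_of_le_of_lt (htail x₀ hx₀int) ?_
      rw [hψab]; linarith
    have hg := abs_lt.1 hGq₁
    have hb₁ := abs_lt.1 hT₁
    have hb₀ := abs_lt.1 hT₀
    show |(∫ r in (0:ℝ)..t, f (r, x)) - ∫ r in (0:ℝ)..t, f (r, x₀)| < ε'
    rw [abs_lt]
    constructor <;> linarith [key₁, key₀, hg.1, hg.2, hb₁.1, hb₁.2, hb₀.1, hb₀.2]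
end

section
/- Let (X, d) be a metric space equipped with a uniformly locally doubling Borel measure 𝔪 whose balls have positive and finite measure, let F : X → X be a map and let x ∈ X with 𝔪({x}) = 0. Let E₁, E₂ ⊆ X be measurable sets with x ∈ E₁ ∩ E₂ such that each Eᵢ has density 1 at x, i.e. 𝔪(Eᵢ ∩ B_r(x)) / 𝔪(B_r(x)) → 1 as r → 0, and such that the restriction of F to each Eᵢ is Lipschitz. Then liminf_{y ∈ E₁, y → x} d(F(x), F(y)) / d(x, y) = liminf_{y ∈ E₂, y → x} d(F(x), F(y)) / d(x, y), and limsup_{y ∈ E₁, y → x} d(F(x), F(y)) / d(x, y) = limsup_{y ∈ E₂, y → x} d(F(x), F(y)) / d(x, y). In particular, the lower and upper approximate slopes of F at x are well defined, independently of the chosen density-1 set. -/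
open MeasureTheory Set ENNReal Filter Metric

section Aux

variable {X : Type*} [MetricSpace X] [MeasurableSpace X] [BorelSpace X]

/-- If a measurable set has density one at `x`, its complement has density zero. -/
lemma aux_compl_density_zero (𝔪 : Measure X) (x : X)
    (hballs : ∀ (z : X) (r : ℝ), 0 < r → 0 < 𝔪 (ball z r) ∧ 𝔪 (ball z r) < ⊤)
    {E : Set X} (hE : MeasurableSet E)
    (hd : Tendsto (fun r : ℝ => 𝔪 (E ∩ ball x r) / 𝔪 (ball x r))
      (nhdsWithin 0 (Ioi 0)) (nhds 1)) :
    Tendsto (fun r : ℝ => 𝔪 (Eᶜ ∩ ball x r) / 𝔪 (ball x r))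
      (nhdsWithin 0 (Ioi 0)) (nhds 0) := by
  have hcont : Tendsto (fun a : ℝ≥0∞ => 1 - a) (nhds 1) (nhds 0) := by
    have := (ENNReal.continuous_sub_left (a := (1 : ℝ≥0∞)) one_ne_top).tendsto 1
    simpa using this
  have h := hcont.comp hd
  apply h.congr'
  filter_upwards [self_mem_nhdsWithin] with r hr
  have hrpos : (0 : ℝ) < r := hr
  obtain ⟨hpos, hfin⟩ := hballs x r hrpos
  have hsub : E ∩ ball x r ⊆ ball x r := inter_subset_right
  have hfin' : 𝔪 (E ∩ ball x r) ≠ ⊤ := ((measure_mono hsub).trans_lt hfin).ne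
  have hdiff : 𝔪 (ball x r \ (E ∩ ball x r)) = 𝔪 (ball x r) - 𝔪 (E ∩ ball x r) :=
    measure_diff hsub (hE.inter measurableSet_ball).nullMeasurableSet hfin'
  have hset : ball x r \ (E ∩ ball x r) = Eᶜ ∩ ball x r := by
    ext z; simp [mem_diff, mem_inter_iff]; tauto
  simp only [Function.comp_apply]
  rw [← hset, hdiff, ENNReal.sub_div (fun _ _ => hpos.ne'),
    ENNReal.div_self hpos.ne' hfin.ne]

/-- Key geometric consequence of doubling: near a point where `Sᶜ` has density zero,
every point `y` close to `x` admits a point of `S` within distance `ε * dist x y`. -/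
lemma aux_exists_close_point (𝔪 : Measure X) [IsUnifLocDoublingMeasure 𝔪] (x : X)
    (hballs : ∀ (z : X) (r : ℝ), 0 < r → 0 < 𝔪 (ball z r) ∧ 𝔪 (ball z r) < ⊤)
    {S : Set X}
    (hdS : Tendsto (fun r : ℝ => 𝔪 (Sᶜ ∩ ball x r) / 𝔪 (ball x r))
      (nhdsWithin 0 (Ioi 0)) (nhds 0))
    {ε : ℝ} (hε : 0 < ε) :
    ∃ δ > 0, ∀ y : X, 0 < dist x y → dist x y < δ →
      ∃ w ∈ S, dist y w < ε * dist x y := by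
  set K : ℝ := 2 * (2 + ε) / ε with hKdef
  have hKpos : 0 < K := by positivity
  set C := IsUnifLocDoublingMeasure.scalingConstantOf 𝔪 K with hCdef
  have hC1 : 1 ≤ C := IsUnifLocDoublingMeasure.one_le_scalingConstantOf 𝔪 K
  have hC0 : (C : ℝ≥0∞) ≠ 0 := by
    simp only [ne_eq, ENNReal.coe_eq_zero]
    exact fun h => by simp [h] at hC1
  have hCtop : (C : ℝ≥0∞) ≠ ⊤ := ENNReal.coe_ne_top
  set sc := IsUnifLocDoublingMeasure.scalingScaleOf 𝔪 K with hscdef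
  have hsc : 0 < sc := IsUnifLocDoublingMeasure.scalingScaleOf_pos 𝔪 K
  have hinvpos : (0 : ℝ≥0∞) < (C : ℝ≥0∞)⁻¹ := ENNReal.inv_pos.mpr hCtop
  have hsmall : {r : ℝ | 𝔪 (Sᶜ ∩ ball x r) / 𝔪 (ball x r) < (C : ℝ≥0∞)⁻¹}
      ∈ nhdsWithin (0 : ℝ) (Ioi 0) := hdS (Iio_mem_nhds hinvpos)
  rw [Metric.mem_nhdsWithin_iff] at hsmall
  obtain ⟨δ₀, hδ₀, hδ₀sub⟩ := hsmall
  refine ⟨min (δ₀ / (1 + ε)) (2 * sc / ε), by positivity, ?_⟩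
  intro y hd0 hdδ
  by_contra hcon
  push_neg at hcon
  set d := dist x y with hddef
  have hd1 : d < δ₀ / (1 + ε) := lt_of_lt_of_le hdδ (min_le_left _ _)
  have hd2 : d < 2 * sc / ε := lt_of_lt_of_le hdδ (min_le_right _ _)
  set r1 := (1 + ε) * d with hr1def
  have hr1pos : 0 < r1 := by positivity
  have hr1δ₀ : r1 < δ₀ := by
    rw [hr1def]
    rw [lt_div_iff₀ (by linarith : (0:ℝ) < 1 + ε)] at hd1
    linarith [hd1]
  -- the small ball around y misses S and sits inside `ball x r1`
  have hmiss : ball y (ε * d) ⊆ Sᶜ ∩ ball x r1 := by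
    intro w hw
    refine ⟨fun hwS => absurd (hcon w hwS) (not_le.mpr (by rwa [mem_ball'] at hw)), ?_⟩
    have : dist w x ≤ dist w y + dist y x := dist_triangle w y x
    have h1 : dist w y < ε * d := hw
    have h2 : dist y x = d := by rw [dist_comm]
    simp only [mem_ball]
    rw [hr1def]; nlinarith
  -- doubling estimate
  have hsub1 : ball x r1 ⊆ closedBall y (K * (ε * d / 2)) := by
    have hKr : K * (ε * d / 2) = (2 + ε) * d := by
      rw [hKdef, div_mul_eq_mul_div, div_eq_iff hε.ne']; ring
    rw [hKr]
    intro z hz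
    have h1 : dist z x < r1 := hz
    have h2 : dist z y ≤ dist z x + dist x y := dist_triangle z x y
    simp only [mem_closedBall]
    rw [hr1def] at h1; nlinarith
  have hρsc : ε * d / 2 ≤ sc := by
    rw [lt_div_iff₀ hε] at hd2
    nlinarith
  have hdbl : 𝔪 (closedBall y (K * (ε * d / 2)))
      ≤ (C : ℝ≥0∞) * 𝔪 (closedBall y (ε * d / 2)) :=
    IsUnifLocDoublingMeasure.measure_mul_le_scalingConstantOf_mul 𝔪
      ⟨hKpos, le_refl K⟩ hρsc
  have hsub2 : closedBall y (ε * d / 2) ⊆ ball y (ε * d) :=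
    closedBall_subset_ball (by nlinarith)
  have hm : 𝔪 (ball x r1) ≤ (C : ℝ≥0∞) * 𝔪 (Sᶜ ∩ ball x r1) :=
    calc 𝔪 (ball x r1) ≤ 𝔪 (closedBall y (K * (ε * d / 2))) := measure_mono hsub1
      _ ≤ (C : ℝ≥0∞) * 𝔪 (closedBall y (ε * d / 2)) := hdbl
      _ ≤ (C : ℝ≥0∞) * 𝔪 (ball y (ε * d)) := by
          exact mul_le_mul_right (measure_mono hsub2) _
      _ ≤ (C : ℝ≥0∞) * 𝔪 (Sᶜ ∩ ball x r1) := mul_le_mul_right (measure_mono hmiss) _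
  -- density estimate at radius r1
  obtain ⟨hmpos, hmfin⟩ := hballs x r1 hr1pos
  have hr1mem : r1 ∈ ball (0:ℝ) δ₀ ∩ Ioi 0 := by
    constructor
    · simp only [mem_ball, Real.dist_eq, sub_zero, abs_of_pos hr1pos]
      exact hr1δ₀
    · exact hr1pos
  have hratio := hδ₀sub hr1mem
  simp only [mem_setOf_eq] at hratio
  have hlt : 𝔪 (Sᶜ ∩ ball x r1) < (C : ℝ≥0∞)⁻¹ * 𝔪 (ball x r1) :=
    (ENNReal.div_lt_iff (Or.inl hmpos.ne') (Or.inl hmfin.ne)).mp hratio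
  have : 𝔪 (ball x r1) < 𝔪 (ball x r1) := by
    calc 𝔪 (ball x r1) ≤ (C : ℝ≥0∞) * 𝔪 (Sᶜ ∩ ball x r1) := hm
      _ < (C : ℝ≥0∞) * ((C : ℝ≥0∞)⁻¹ * 𝔪 (ball x r1)) :=
          (ENNReal.mul_lt_mul_iff_right hC0 hCtop).mpr hlt
      _ = 𝔪 (ball x r1) := by
          rw [← mul_assoc, ENNReal.mul_inv_cancel hC0 hCtop, one_mul]
  exact absurd this (lt_irrefl _)

/-- If a set has density one at `x` and `{x}` is null, then `x` is an accumulation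
point of the set. -/
lemma aux_neBot (𝔪 : Measure X) (x : X)
    (hballs : ∀ (z : X) (r : ℝ), 0 < r → 0 < 𝔪 (ball z r) ∧ 𝔪 (ball z r) < ⊤)
    (hx : 𝔪 {x} = 0) {E : Set X}
    (hd : Tendsto (fun r : ℝ => 𝔪 (E ∩ ball x r) / 𝔪 (ball x r))
      (nhdsWithin 0 (Ioi 0)) (nhds 1)) :
    (nhdsWithin x (E \ {x})).NeBot := by
  rw [← mem_closure_iff_nhdsWithin_neBot, Metric.mem_closure_iff]
  intro r hr
  have hev : ∀ᶠ s in nhdsWithin (0:ℝ) (Ioi 0),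
      𝔪 (E ∩ ball x s) / 𝔪 (ball x s) ∈ Ioi (0 : ℝ≥0∞) :=
    hd (Ioi_mem_nhds zero_lt_one)
  have hIoo : Ioo (0:ℝ) r ∈ nhdsWithin (0:ℝ) (Ioi 0) :=
    Ioo_mem_nhdsGT_of_mem ⟨le_refl 0, hr⟩
  obtain ⟨s, hs1, hs2⟩ := (hev.and (eventually_of_mem hIoo (fun _ h => h))).exists
  have hspos : 0 < s := hs2.1
  have hne : 𝔪 (E ∩ ball x s) ≠ 0 := by
    intro h0
    rw [h0] at hs1
    simp at hs1
  have hne' : 𝔪 ((E ∩ ball x s) \ {x}) ≠ 0 := by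
    rwa [measure_diff_null hx]
  obtain ⟨z, hz⟩ := nonempty_of_measure_ne_zero hne'
  refine ⟨z, ⟨hz.1.1, hz.2⟩, ?_⟩
  have : dist z x < s := hz.1.2
  rw [dist_comm]
  exact this.trans hs2.2

/-- One-sided comparison of approximate liminf/limsup slopes. -/
lemma aux_comparison (F : X → X) (x : X) {A B : Set X} {KA KB : NNReal}
    (hxA : x ∈ A) (hxB : x ∈ B)
    (hLA : LipschitzOnWith KA F A) (hLB : LipschitzOnWith KB F B)
    (hkey : ∀ ε : ℝ, 0 < ε → ∃ δ > 0, ∀ y : X, 0 < dist x y → dist x y < δ →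
      ∃ w, (w ∈ A ∧ w ∈ B) ∧ dist y w < ε * dist x y)
    (hneA : (nhdsWithin x (A \ {x})).NeBot) (hneB : (nhdsWithin x (B \ {x})).NeBot) :
    liminf (fun y => dist (F x) (F y) / dist x y) (nhdsWithin x (B \ {x}))
        ≤ liminf (fun y => dist (F x) (F y) / dist x y) (nhdsWithin x (A \ {x}))
      ∧ limsup (fun y => dist (F x) (F y) / dist x y) (nhdsWithin x (A \ {x}))
        ≤ limsup (fun y => dist (F x) (F y) / dist x y) (nhdsWithin x (B \ {x})) := by
  set f : X → ℝ := fun y => dist (F x) (F y) / dist x y with hfdef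
  set lA := nhdsWithin x (A \ {x}) with hlA
  set lB := nhdsWithin x (B \ {x}) with hlB
  have hf0 : ∀ y, 0 ≤ f y := fun y => div_nonneg dist_nonneg dist_nonneg
  have hboundA : ∀ᶠ y in lA, f y ≤ (KA : ℝ) := by
    filter_upwards [eventually_mem_nhdsWithin] with y hy
    have hyx : 0 < dist x y := dist_pos.mpr (fun h => hy.2 (by simp [h.symm]))
    rw [hfdef, div_le_iff₀ hyx]
    exact hLA.dist_le_mul x hxA y hy.1
  have hboundB : ∀ᶠ y in lB, f y ≤ (KB : ℝ) := by
    filter_upwards [eventually_mem_nhdsWithin] with y hy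
    have hyx : 0 < dist x y := dist_pos.mpr (fun h => hy.2 (by simp [h.symm]))
    rw [hfdef, div_le_iff₀ hyx]
    exact hLB.dist_le_mul x hxB y hy.1
  have hbddA_above : IsBoundedUnder (· ≤ ·) lA f := ⟨(KA : ℝ), hboundA⟩
  have hbddB_above : IsBoundedUnder (· ≤ ·) lB f := ⟨(KB : ℝ), hboundB⟩
  have hbddA_below : IsBoundedUnder (· ≥ ·) lA f :=
    ⟨0, Filter.eventually_map.mpr (Filter.Eventually.of_forall hf0)⟩
  have hbddB_below : IsBoundedUnder (· ≥ ·) lB f :=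
    ⟨0, Filter.eventually_map.mpr (Filter.Eventually.of_forall hf0)⟩
  haveI := hneA; haveI := hneB
  have hcobA_ge : IsCoboundedUnder (· ≥ ·) lA f := hbddA_above.isCoboundedUnder_ge
  have hcobA_le : IsCoboundedUnder (· ≤ ·) lA f := hbddA_below.isCoboundedUnder_le
  set LA := liminf f lA with hLAdef
  set MA := limsup f lA with hMAdef
  have hLA0 : 0 ≤ LA := le_liminf_of_le hcobA_ge (Filter.Eventually.of_forall hf0)
  constructor
  · -- liminf comparison
    have hev : ∀ᶠ ε in nhdsWithin (0:ℝ) (Ioi 0),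
        liminf f lB ≤ (LA + ((KA : ℝ) + 1) * ε) / (1 - ε) := by
      filter_upwards [Ioo_mem_nhdsGT_of_mem (Set.mem_Ico.mpr ⟨le_refl (0:ℝ), one_pos⟩)]
        with ε hε
      obtain ⟨hε0, hε1⟩ := hε
      obtain ⟨δ, hδ, hδkey⟩ := hkey ε hε0
      have hfreqA : ∃ᶠ y in lA, f y < LA + ε :=
        frequently_lt_of_liminf_lt hcobA_ge (lt_add_of_pos_right _ hε0)
      refine liminf_le_of_frequently_le ?_ hbddB_below
      rw [hlB, frequently_nhdsWithin_iff, nhds_basis_ball.frequently_iff]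
      intro r hrpos
      set ρ := min δ (r / 2) with hρdef
      have hρpos : 0 < ρ := lt_min hδ (by positivity)
      have hball : ∀ᶠ y in lA, y ∈ ball x ρ :=
        eventually_nhdsWithin_of_eventually_nhds
          (eventually_mem_set.mpr (ball_mem_nhds x hρpos))
      obtain ⟨y, ⟨hyf, hyball⟩, hyA⟩ :=
        ((hfreqA.and_eventually hball).and_eventually eventually_mem_nhdsWithin).exists
      set d := dist x y with hddef
      have hd0 : 0 < d := dist_pos.mpr (fun h => hyA.2 (by simp [h.symm]))
      have hdρ : d < ρ := by rw [hddef, dist_comm]; exact hyball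
      obtain ⟨w, ⟨hwA, hwB⟩, hw⟩ :=
        hδkey y hd0 (hdρ.trans_le (min_le_left _ _))
      have hdw_low : (1 - ε) * d < dist x w := by
        have h1 : dist x y ≤ dist x w + dist w y := dist_triangle x w y
        have h2 : dist w y = dist y w := dist_comm w y
        nlinarith
      have hdwpos : 0 < dist x w := lt_of_lt_of_le (by nlinarith) hdw_low.le
      have hdw_hi : dist x w < (1 + ε) * d := by
        have h1 : dist x w ≤ dist x y + dist y w := dist_triangle x y w
        nlinarith
      refine ⟨w, ?_, ?_, hwB, ?_⟩
      · simp only [mem_ball]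
        rw [dist_comm]
        have : d < r / 2 := hdρ.trans_le (min_le_right _ _)
        nlinarith
      · -- slope bound
        have hLip : dist (F y) (F w) ≤ (KA : ℝ) * (ε * d) := by
          calc dist (F y) (F w) ≤ (KA : ℝ) * dist y w := hLA.dist_le_mul y hyA.1 w hwA
            _ ≤ (KA : ℝ) * (ε * d) := by
                exact mul_le_mul_of_nonneg_left hw.le KA.2
        have hay : dist (F x) (F y) < (LA + ε) * d := by
          have := hyf
          rw [hfdef] at this
          simp only at this
          rw [div_lt_iff₀ hd0] at this
          linarith
        have haw : dist (F x) (F w) ≤ dist (F x) (F y) + dist (F y) (F w) :=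
          dist_triangle _ _ _
        have key1 : dist (F x) (F w) ≤ (LA + ((KA : ℝ) + 1) * ε) * d := by nlinarith
        have hcoeff : 0 ≤ LA + ((KA : ℝ) + 1) * ε := by positivity
        rw [hfdef]
        simp only
        rw [div_le_div_iff₀ hdwpos (by linarith : (0:ℝ) < 1 - ε)]
        nlinarith [mul_le_mul_of_nonneg_right key1 (by linarith : (0:ℝ) ≤ 1 - ε),
          mul_le_mul_of_nonneg_left hdw_low.le hcoeff]
      · intro h
        rw [mem_singleton_iff] at h
        rw [h] at hdwpos
        simp at hdwpos
    have hT : Tendsto (fun ε : ℝ => (LA + ((KA : ℝ) + 1) * ε) / (1 - ε))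
        (nhdsWithin (0:ℝ) (Ioi 0)) (nhds LA) := by
      have hc : ContinuousAt (fun ε : ℝ => (LA + ((KA : ℝ) + 1) * ε) / (1 - ε)) 0 := by
        apply ContinuousAt.div
        · fun_prop
        · fun_prop
        · norm_num
      have := hc.tendsto
      simp only [mul_zero, add_zero, sub_zero, div_one] at this
      exact this.mono_left nhdsWithin_le_nhds
    exact ge_of_tendsto hT hev
  · -- limsup comparison
    have hev : ∀ᶠ ε in nhdsWithin (0:ℝ) (Ioi 0),
        (MA - ((KA : ℝ) + 1) * ε) / (1 + ε) ≤ limsup f lB := by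
      filter_upwards [Ioo_mem_nhdsGT_of_mem (Set.mem_Ico.mpr ⟨le_refl (0:ℝ), one_pos⟩)]
        with ε hε
      obtain ⟨hε0, hε1⟩ := hε
      obtain ⟨δ, hδ, hδkey⟩ := hkey ε hε0
      have hfreqA : ∃ᶠ y in lA, MA - ε < f y :=
        frequently_lt_of_lt_limsup hcobA_le (sub_lt_self _ hε0)
      refine le_limsup_of_frequently_le ?_ hbddB_above
      rw [hlB, frequently_nhdsWithin_iff, nhds_basis_ball.frequently_iff]
      intro r hrpos
      set ρ := min δ (r / 2) with hρdef
      have hρpos : 0 < ρ := lt_min hδ (by positivity)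
      have hball : ∀ᶠ y in lA, y ∈ ball x ρ :=
        eventually_nhdsWithin_of_eventually_nhds
          (eventually_mem_set.mpr (ball_mem_nhds x hρpos))
      obtain ⟨y, ⟨hyf, hyball⟩, hyA⟩ :=
        ((hfreqA.and_eventually hball).and_eventually eventually_mem_nhdsWithin).exists
      set d := dist x y with hddef
      have hd0 : 0 < d := dist_pos.mpr (fun h => hyA.2 (by simp [h.symm]))
      have hdρ : d < ρ := by rw [hddef, dist_comm]; exact hyball
      obtain ⟨w, ⟨hwA, hwB⟩, hw⟩ :=
        hδkey y hd0 (hdρ.trans_le (min_le_left _ _))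
      have hdw_low : (1 - ε) * d < dist x w := by
        have h1 : dist x y ≤ dist x w + dist w y := dist_triangle x w y
        have h2 : dist w y = dist y w := dist_comm w y
        nlinarith
      have hdwpos : 0 < dist x w := lt_of_lt_of_le (by nlinarith) hdw_low.le
      have hdw_hi : dist x w < (1 + ε) * d := by
        have h1 : dist x w ≤ dist x y + dist y w := dist_triangle x y w
        nlinarith
      refine ⟨w, ?_, ?_, hwB, ?_⟩
      · simp only [mem_ball]
        rw [dist_comm]
        have : d < r / 2 := hdρ.trans_le (min_le_right _ _)
        nlinarith
      · -- slope lower bound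
        have hLip : dist (F y) (F w) ≤ (KA : ℝ) * (ε * d) := by
          calc dist (F y) (F w) ≤ (KA : ℝ) * dist y w := hLA.dist_le_mul y hyA.1 w hwA
            _ ≤ (KA : ℝ) * (ε * d) := by
                exact mul_le_mul_of_nonneg_left hw.le KA.2
        have hay : (MA - ε) * d < dist (F x) (F y) := by
          have := hyf
          rw [hfdef] at this
          simp only at this
          rw [lt_div_iff₀ hd0] at this
          linarith
        have haw : dist (F x) (F y) ≤ dist (F x) (F w) + dist (F y) (F w) := by
          have := dist_triangle (F x) (F w) (F y)
          rw [dist_comm (F w) (F y)] at this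
          linarith
        have key2 : (MA - ((KA : ℝ) + 1) * ε) * d ≤ dist (F x) (F w) := by nlinarith
        rw [hfdef]
        simp only
        rcases le_or_gt (MA - ((KA : ℝ) + 1) * ε) 0 with hc | hc
        · exact le_trans (div_nonpos_of_nonpos_of_nonneg hc (by linarith))
            (div_nonneg dist_nonneg dist_nonneg)
        · rw [div_le_div_iff₀ (by linarith : (0:ℝ) < 1 + ε) hdwpos]
          nlinarith [mul_le_mul_of_nonneg_right key2 (by linarith : (0:ℝ) ≤ 1 + ε),
            mul_le_mul_of_nonneg_left hdw_hi.le hc.le]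
      · intro h
        rw [mem_singleton_iff] at h
        rw [h] at hdwpos
        simp at hdwpos
    have hT : Tendsto (fun ε : ℝ => (MA - ((KA : ℝ) + 1) * ε) / (1 + ε))
        (nhdsWithin (0:ℝ) (Ioi 0)) (nhds MA) := by
      have hc : ContinuousAt (fun ε : ℝ => (MA - ((KA : ℝ) + 1) * ε) / (1 + ε)) 0 := by
        apply ContinuousAt.div
        · fun_prop
        · fun_prop
        · norm_num
      have := hc.tendsto
      simp only [mul_zero, sub_zero, add_zero, div_one] at this
      exact this.mono_left nhdsWithin_le_nhds
    exact le_of_tendsto hT hev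

end Aux

/-- **Well-posedness of the approximate slopes** (Remark 1.4 of the paper).  Let
`(X, d)` be a metric space equipped with a uniformly locally doubling Borel measure
`𝔪` whose balls have positive and finite measure, let `F : X → X` and `x ∈ X` with
`𝔪({x}) = 0`.  If `E₁, E₂` are measurable sets containing `x`, of density `1` at
`x`, on which `F` is Lipschitz, then the liminf and limsup of
`d(F(x), F(y)) / d(x, y)` as `y → x` within `E₁ \ {x}` coincide with the respective
ones within `E₂ \ {x}`: the lower and upper approximate slopes of `F` at `x` do not
depend on the chosen density-1 set. -/
theorem approximate_slopes_well_defined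
    {X : Type*} [MetricSpace X] [MeasurableSpace X] [BorelSpace X]
    (𝔪 : Measure X) [IsUnifLocDoublingMeasure 𝔪]
    (hballs : ∀ (z : X) (r : ℝ), 0 < r → 0 < 𝔪 (ball z r) ∧ 𝔪 (ball z r) < ⊤)
    (F : X → X) (x : X) (hx : 𝔪 {x} = 0)
    (E₁ E₂ : Set X) (hE₁ : MeasurableSet E₁) (hE₂ : MeasurableSet E₂)
    (hx₁ : x ∈ E₁) (hx₂ : x ∈ E₂)
    (hd₁ : Tendsto (fun r : ℝ => 𝔪 (E₁ ∩ ball x r) / 𝔪 (ball x r))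
      (nhdsWithin 0 (Ioi 0)) (nhds 1))
    (hd₂ : Tendsto (fun r : ℝ => 𝔪 (E₂ ∩ ball x r) / 𝔪 (ball x r))
      (nhdsWithin 0 (Ioi 0)) (nhds 1))
    (hL₁ : ∃ K : NNReal, LipschitzOnWith K F E₁)
    (hL₂ : ∃ K : NNReal, LipschitzOnWith K F E₂) :
    liminf (fun y => dist (F x) (F y) / dist x y) (nhdsWithin x (E₁ \ {x}))
        = liminf (fun y => dist (F x) (F y) / dist x y) (nhdsWithin x (E₂ \ {x}))
      ∧ limsup (fun y => dist (F x) (F y) / dist x y) (nhdsWithin x (E₁ \ {x}))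
        = limsup (fun y => dist (F x) (F y) / dist x y) (nhdsWithin x (E₂ \ {x})) := by
  obtain ⟨K₁, hK₁⟩ := hL₁
  obtain ⟨K₂, hK₂⟩ := hL₂
  have hdc₁ := aux_compl_density_zero 𝔪 x hballs hE₁ hd₁
  have hdc₂ := aux_compl_density_zero 𝔪 x hballs hE₂ hd₂
  have hdS : Tendsto (fun r : ℝ => 𝔪 ((E₁ ∩ E₂)ᶜ ∩ ball x r) / 𝔪 (ball x r))
      (nhdsWithin 0 (Ioi 0)) (nhds 0) := by
    have hsum : Tendsto (fun r : ℝ =>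
        𝔪 (E₁ᶜ ∩ ball x r) / 𝔪 (ball x r) + 𝔪 (E₂ᶜ ∩ ball x r) / 𝔪 (ball x r))
        (nhdsWithin (0:ℝ) (Ioi 0)) (nhds 0) := by
      have := hdc₁.add hdc₂
      simpa using this
    apply tendsto_of_tendsto_of_tendsto_of_le_of_le tendsto_const_nhds hsum
    · intro r; exact zero_le
    · intro r
      have hsub : (E₁ ∩ E₂)ᶜ ∩ ball x r ⊆ (E₁ᶜ ∩ ball x r) ∪ (E₂ᶜ ∩ ball x r) := by
        intro z hz
        rcases (by simpa [compl_inter] using hz.1 : z ∈ E₁ᶜ ∪ E₂ᶜ) with h | h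
        · exact Or.inl ⟨h, hz.2⟩
        · exact Or.inr ⟨h, hz.2⟩
      calc 𝔪 ((E₁ ∩ E₂)ᶜ ∩ ball x r) / 𝔪 (ball x r)
          ≤ (𝔪 (E₁ᶜ ∩ ball x r) + 𝔪 (E₂ᶜ ∩ ball x r)) / 𝔪 (ball x r) :=
            ENNReal.div_le_div_right ((measure_mono hsub).trans (measure_union_le _ _)) _
        _ = 𝔪 (E₁ᶜ ∩ ball x r) / 𝔪 (ball x r) + 𝔪 (E₂ᶜ ∩ ball x r) / 𝔪 (ball x r) :=
            ENNReal.add_div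
  have hkey := fun (ε : ℝ) (hε : 0 < ε) => aux_exists_close_point 𝔪 x hballs hdS hε
  have hkeyA : ∀ ε : ℝ, 0 < ε → ∃ δ > 0, ∀ y : X, 0 < dist x y → dist x y < δ →
      ∃ w, (w ∈ E₁ ∧ w ∈ E₂) ∧ dist y w < ε * dist x y := by
    intro ε hε
    obtain ⟨δ, hδ, h⟩ := hkey ε hε
    exact ⟨δ, hδ, fun y h1 h2 => by
      obtain ⟨w, hwS, hw⟩ := h y h1 h2
      exact ⟨w, ⟨hwS.1, hwS.2⟩, hw⟩⟩
  have hkeyB : ∀ ε : ℝ, 0 < ε → ∃ δ > 0, ∀ y : X, 0 < dist x y → dist x y < δ →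
      ∃ w, (w ∈ E₂ ∧ w ∈ E₁) ∧ dist y w < ε * dist x y := by
    intro ε hε
    obtain ⟨δ, hδ, h⟩ := hkey ε hε
    exact ⟨δ, hδ, fun y h1 h2 => by
      obtain ⟨w, hwS, hw⟩ := h y h1 h2
      exact ⟨w, ⟨hwS.2, hwS.1⟩, hw⟩⟩
  have hne₁ := aux_neBot 𝔪 x hballs hx hd₁
  have hne₂ := aux_neBot 𝔪 x hballs hx hd₂
  have h12 := aux_comparison F x hx₁ hx₂ hK₁ hK₂ hkeyA hne₁ hne₂
  have h21 := aux_comparison F x hx₂ hx₁ hK₂ hK₁ hkeyB hne₂ hne₁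
  exact ⟨le_antisymm h21.1 h12.1, le_antisymm h12.2 h21.2⟩
end

section
/- Let (X, d) be a metric space with a Borel measure 𝔪, let A ⊆ X be a nonempty closed set and set u(z) := dist(z, A). Fix T > 0, L ≥ 1, p ∈ (1, ∞), and write p′ := p/(p−1). Let Φ : [0, T] × X → X be jointly measurable with Φ₀ = id and (Φ_t)_# 𝔪 ≤ L 𝔪 for every t ∈ [0, T], and let β : [0, T] × X → [0, ∞] be measurable with ∫₀ᵀ ‖β_t‖_{L^p(𝔪)} dt < ∞. Assume that for 𝔪-a.e. x ∈ X the function t ↦ u(Φ_t(x)) is absolutely continuous on [0, T] with |d/dt u(Φ_t(x))| ≤ β_t(Φ_t(x)) for a.e. t ∈ [0, T]. Let B ⊆ X be a Borel set and r₀ > 0 be such that ∫_{B ∩ {u ≤ r₀}} u^{−p′} d𝔪 < ∞. Then for 𝔪-a.e. x ∈ X satisfying u(x) ≥ r₀ and Φ_t(x) ∈ B for every t ∈ [0, T], one has inf_{t ∈ [0, T]} u(Φ_t(x)) > 0; in particular Φ_t(x) ∉ A for every t ∈ [0, T]. -/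
open MeasureTheory Set ENNReal Metric

/-- **Flows with bounded compressibility avoid thin closed sets** (Proposition 4.5 of
the paper, abstract form).  Let `(X, d)` be a metric space with a Borel measure `𝔪`,
`A` a nonempty closed set and `u(z) := dist(z, A)`.  Fix `T > 0`, `L ≥ 1`,
`p ∈ (1, ∞)`, `p' := p/(p-1)`.  Let `Φ` be a jointly measurable flow map with
`Φ₀ = id` and `(Φ_t)_# 𝔪 ≤ L 𝔪` for `t ∈ [0, T]`, and let `β ≥ 0` be measurable with
`∫₀ᵀ ‖β_t‖_{L^p} dt < ∞`.  Assume that for `𝔪`-a.e. `x` the map `t ↦ u(Φ_t(x))` is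
absolutely continuous on `[0, T]` with `|d/dt u(Φ_t(x))| ≤ β_t(Φ_t(x))` a.e.
(encoded here via the integral representation by an integrable a.e. derivative `v`).
If `B` is Borel, `r₀ > 0`, and `∫_{B ∩ {u ≤ r₀}} u^{-p'} d𝔪 < ∞` (with `u^{-p'} = ∞`
on `{u = 0}`), then for `𝔪`-a.e. `x` with `u(x) ≥ r₀` and `Φ_t(x) ∈ B` for all
`t ∈ [0, T]`, the trajectory stays quantitatively away from `A`:
`inf_{t ∈ [0,T]} u(Φ_t(x)) > 0`, and in particular `Φ_t(x) ∉ A` for every `t`. -/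
theorem flow_avoids_thin_closed_set
    {X : Type*} [MetricSpace X] [MeasurableSpace X] [BorelSpace X]
    (𝔪 : Measure X)
    (A : Set X) (hA : A.Nonempty) (hAc : IsClosed A)
    (T L p : ℝ) (hT : 0 < T) (hL : 1 ≤ L) (hp : 1 < p)
    (Φ : ℝ → X → X) (hΦm : Measurable (Function.uncurry Φ))
    (hΦ0 : ∀ x, Φ 0 x = x)
    (hpush : ∀ t ∈ Icc (0:ℝ) T, ∀ S : Set X, MeasurableSet S →
      𝔪 (Φ t ⁻¹' S) ≤ ENNReal.ofReal L * 𝔪 S)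
    (β : ℝ → X → ℝ≥0∞) (hβm : Measurable (Function.uncurry β))
    (hβint : ∫⁻ t in Icc (0:ℝ) T, (∫⁻ x, β t x ^ p ∂𝔪) ^ (1/p) < ⊤)
    (hAC : ∀ᵐ x ∂𝔪, ∃ v : ℝ → ℝ, IntervalIntegrable v volume 0 T ∧
      (∀ t ∈ Icc (0:ℝ) T,
        infDist (Φ t x) A = infDist x A + ∫ r in (0:ℝ)..t, v r) ∧
      (∀ᵐ t ∂(volume.restrict (Icc (0:ℝ) T)),
        ENNReal.ofReal |v t| ≤ β t (Φ t x)))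
    (B : Set X) (hB : MeasurableSet B) (r₀ : ℝ) (hr₀ : 0 < r₀)
    (hfin : ∫⁻ z in B ∩ {z | infDist z A ≤ r₀},
      ((ENNReal.ofReal (infDist z A))⁻¹) ^ (p/(p-1)) ∂𝔪 < ⊤) :
    ∀ᵐ x ∂𝔪,
      (r₀ ≤ infDist x A ∧ ∀ t ∈ Icc (0:ℝ) T, Φ t x ∈ B) →
        (∃ c : ℝ, 0 < c ∧ ∀ t ∈ Icc (0:ℝ) T, c ≤ infDist (Φ t x) A) ∧
          ∀ t ∈ Icc (0:ℝ) T, Φ t x ∉ A := by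
  classical
  have hp0 : (0:ℝ) < p := lt_trans one_pos hp
  have hp1 : (0:ℝ) < p - 1 := sub_pos.mpr hp
  set q : ℝ := p / (p - 1) with hq_def
  have hq_pos : 0 < q := div_pos hp0 hp1
  have hpq : p.HolderConjugate q := Real.HolderConjugate.conjExponent hp
  have hT0 : (0:ℝ) ≤ T := hT.le
  have hu_meas : Measurable fun z : X => infDist z A := measurable_infDist
  set S : Set X := B ∩ {z | infDist z A ≤ r₀} with hS_def
  have hS_meas : MeasurableSet S :=
    hB.inter (measurableSet_le hu_meas measurable_const)
  set H : X → ℝ≥0∞ := S.indicator (fun z => (ENNReal.ofReal (infDist z A))⁻¹) with hH_def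
  have hH_meas : Measurable H := (hu_meas.ennreal_ofReal.inv).indicator hS_meas
  have hΦt : ∀ t : ℝ, Measurable (Φ t) := fun t =>
    hΦm.comp (measurable_const.prodMk measurable_id)
  have hβt : ∀ t : ℝ, Measurable (β t) := fun t =>
    hβm.comp (measurable_const.prodMk measurable_id)
  set V : ℝ≥0∞ := ∫⁻ z in S, ((ENNReal.ofReal (infDist z A))⁻¹) ^ q ∂𝔪 with hV_def
  have hV_ne : V ≠ ⊤ := hfin.ne
  have hHq : ∫⁻ z, H z ^ q ∂𝔪 = V := by
    have hcong : ∀ z, H z ^ q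
        = S.indicator (fun z => ((ENNReal.ofReal (infDist z A))⁻¹) ^ q) z := by
      intro z
      by_cases hz : z ∈ S
      · simp [hH_def, hz]
      · simp [hH_def, hz, ENNReal.zero_rpow_of_pos hq_pos]
    rw [lintegral_congr hcong, lintegral_indicator hS_meas]
  set K : ℝ≥0∞ := V ^ (1/q) with hK_def
  have hK_ne : K ≠ ⊤ := (ENNReal.rpow_lt_top_of_nonneg (by positivity) hV_ne).ne
  -- the set `S` has finite measure
  have hmS : 𝔪 S < ⊤ := by
    set c : ℝ≥0∞ := ((ENNReal.ofReal r₀)⁻¹) ^ q with hc_def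
    have hc_ne0 : c ≠ 0 := by
      refine (ENNReal.rpow_pos ?_ ?_).ne'
      · exact ENNReal.inv_pos.mpr ENNReal.ofReal_ne_top
      · exact ENNReal.inv_ne_top.mpr (ENNReal.ofReal_pos.mpr hr₀).ne'
    have hcm : c * 𝔪 S ≤ V := by
      rw [← setLIntegral_const S c, hV_def]
      refine lintegral_mono_ae ?_
      filter_upwards [ae_restrict_mem hS_meas] with z hz
      have hz2 : infDist z A ≤ r₀ := hz.2
      have hinv : (ENNReal.ofReal r₀)⁻¹ ≤ (ENNReal.ofReal (infDist z A))⁻¹ :=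
        ENNReal.inv_le_inv' (ENNReal.ofReal_le_ofReal hz2)
      exact ENNReal.rpow_le_rpow hinv hq_pos.le
    by_contra h
    rw [not_lt, top_le_iff] at h
    rw [h, ENNReal.mul_top hc_ne0] at hcm
    exact hV_ne (top_le_iff.mp hcm)
  -- push-forward bound as a measure inequality
  have hmap : ∀ t ∈ Icc (0:ℝ) T, 𝔪.map (Φ t) ≤ (ENNReal.ofReal L) • 𝔪 := by
    intro t ht
    refine Measure.le_iff.mpr fun s hs => ?_
    rw [Measure.map_apply (hΦt t) hs, Measure.smul_apply, smul_eq_mul]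
    exact hpush t ht s hs
  -- joint measurability of the integrand
  have m_g : Measurable fun pr : ℝ × X => β pr.1 (Φ pr.1 pr.2) * H (Φ pr.1 pr.2) := by
    have h1 : Measurable fun pr : ℝ × X => β pr.1 (Φ pr.1 pr.2) :=
      hβm.comp (measurable_fst.prodMk hΦm)
    exact h1.mul (hH_meas.comp hΦm)
  set G : X → ℝ≥0∞ := fun x => ∫⁻ t in Icc (0:ℝ) T, β t (Φ t x) * H (Φ t x) with hG_def
  have hG_meas : Measurable G := by
    have : Measurable (Function.uncurry fun (x : X) (t : ℝ) => β t (Φ t x) * H (Φ t x)) :=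
      m_g.comp measurable_swap
    exact this.lintegral_prod_right
  -- for every rational time, the set where `G = ⊤` inside `Φ_q⁻¹ S` is null
  have key : ∀ qr : ℚ, (qr:ℝ) ∈ Icc (0:ℝ) T →
      𝔪 ({x | G x = ⊤} ∩ Φ (qr:ℝ) ⁻¹' S) = 0 := by
    intro qr hqr
    set μq : Measure X := 𝔪.restrict (Φ (qr:ℝ) ⁻¹' S) with hμq
    haveI : IsFiniteMeasure μq := by
      constructor
      rw [hμq, Measure.restrict_apply_univ]
      exact lt_of_le_of_lt (hpush _ hqr S hS_meas)
        (ENNReal.mul_lt_top ENNReal.ofReal_lt_top hmS)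
    have ht_bound : ∀ t ∈ Icc (0:ℝ) T,
        ∫⁻ x, β t (Φ t x) * H (Φ t x) ∂μq
          ≤ (ENNReal.ofReal L * K) * (∫⁻ z, β t z ^ p ∂𝔪) ^ (1/p) := by
      intro t ht
      have hmeas_mul : Measurable fun z => β t z * H z := (hβt t).mul hH_meas
      calc ∫⁻ x, β t (Φ t x) * H (Φ t x) ∂μq
          ≤ ∫⁻ x, β t (Φ t x) * H (Φ t x) ∂𝔪 :=
            lintegral_mono' Measure.restrict_le_self le_rfl
        _ = ∫⁻ z, β t z * H z ∂(𝔪.map (Φ t)) := (lintegral_map hmeas_mul (hΦt t)).symm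
        _ ≤ ∫⁻ z, β t z * H z ∂((ENNReal.ofReal L) • 𝔪) :=
            lintegral_mono' (hmap t ht) le_rfl
        _ = ENNReal.ofReal L * ∫⁻ z, β t z * H z ∂𝔪 := lintegral_smul_measure _ _
        _ ≤ ENNReal.ofReal L *
              ((∫⁻ z, β t z ^ p ∂𝔪) ^ (1/p) * (∫⁻ z, H z ^ q ∂𝔪) ^ (1/q)) :=
            mul_le_mul_right
              (ENNReal.lintegral_mul_le_Lp_mul_Lq 𝔪 hpq (hβt t).aemeasurable
                hH_meas.aemeasurable) _
        _ = (ENNReal.ofReal L * K) * (∫⁻ z, β t z ^ p ∂𝔪) ^ (1/p) := by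
            rw [hHq, hK_def]; ring
    have hint : ∫⁻ x, G x ∂μq < ⊤ := by
      have hswap : ∫⁻ x, G x ∂μq
          = ∫⁻ t in Icc (0:ℝ) T, (∫⁻ x, β t (Φ t x) * H (Φ t x) ∂μq) ∂volume := by
        simp only [hG_def]
        exact lintegral_lintegral_swap ((m_g.comp measurable_swap).aemeasurable)
      rw [hswap]
      have hLK_ne : ENNReal.ofReal L * K ≠ ⊤ :=
        ENNReal.mul_ne_top ENNReal.ofReal_ne_top hK_ne
      calc ∫⁻ t in Icc (0:ℝ) T, (∫⁻ x, β t (Φ t x) * H (Φ t x) ∂μq) ∂volume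
          ≤ ∫⁻ t in Icc (0:ℝ) T,
              (ENNReal.ofReal L * K) * (∫⁻ z, β t z ^ p ∂𝔪) ^ (1/p) ∂volume :=
            lintegral_mono_ae ((ae_restrict_mem measurableSet_Icc).mono ht_bound)
        _ = (ENNReal.ofReal L * K)
              * ∫⁻ t in Icc (0:ℝ) T, (∫⁻ z, β t z ^ p ∂𝔪) ^ (1/p) ∂volume :=
            lintegral_const_mul' _ _ hLK_ne
        _ < ⊤ := ENNReal.mul_lt_top (lt_top_iff_ne_top.mpr hLK_ne) hβint
    have hae := ae_lt_top hG_meas hint.ne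
    have h0 : μq {x | G x = ⊤} = 0 := by
      rw [ae_iff] at hae
      simpa [not_lt, top_le_iff] using hae
    have hGset : MeasurableSet {x | G x = ⊤} := hG_meas (measurableSet_singleton ⊤)
    calc 𝔪 ({x | G x = ⊤} ∩ Φ (qr:ℝ) ⁻¹' S)
        = μq {x | G x = ⊤} := (Measure.restrict_apply hGset).symm
      _ = 0 := h0
  -- the union of all rational-time preimages of `S`
  set E : Set X := ⋃ qr : ℚ,
      (if (qr:ℝ) ∈ Icc (0:ℝ) T then Φ (qr:ℝ) ⁻¹' S else ∅) with hE_def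
  have hnull : 𝔪 ({x | G x = ⊤} ∩ E) = 0 := by
    rw [hE_def, inter_iUnion]
    refine measure_iUnion_null fun qr => ?_
    by_cases hqr : (qr:ℝ) ∈ Icc (0:ℝ) T
    · simpa [hqr] using key qr hqr
    · simp [hqr]
  have hae2 : ∀ᵐ x ∂𝔪, ¬(G x = ⊤ ∧ x ∈ E) := by
    rw [ae_iff]
    have hset : {x | ¬¬(G x = ⊤ ∧ x ∈ E)} = {x | G x = ⊤} ∩ E := by
      ext x; simp [not_not, Set.mem_inter_iff]
    rw [hset]
    exact hnull
  -- main argument, pointwise in a good `x`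
  filter_upwards [hAC, hae2] with x hx hx2 hprem
  obtain ⟨hxr, hxB⟩ := hprem
  obtain ⟨v, hv_int, hv_eq, hv_le⟩ := hx
  have hIv : IntegrableOn v (Icc (0:ℝ) T) volume :=
    (intervalIntegrable_iff_integrableOn_Icc_of_le hT0).mp hv_int
  have hfc : ContinuousOn (fun t => infDist (Φ t x) A) (Icc (0:ℝ) T) := by
    have h2 : ContinuousOn (fun s => ∫ r in (0:ℝ)..s, v r) (uIcc (0:ℝ) T) :=
      intervalIntegral.continuousOn_primitive_interval (by rwa [uIcc_of_le hT0])
    rw [uIcc_of_le hT0] at h2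
    exact (continuousOn_const.add h2).congr fun t ht => hv_eq t ht
  obtain ⟨tm, htm, hmin'⟩ :=
    isCompact_Icc.exists_isMinOn (⟨0, left_mem_Icc.mpr hT0⟩ : (Icc (0:ℝ) T).Nonempty) hfc
  have hmin : ∀ t ∈ Icc (0:ℝ) T, infDist (Φ tm x) A ≤ infDist (Φ t x) A :=
    fun t ht => isMinOn_iff.mp hmin' t ht
  by_cases hpos : 0 < infDist (Φ tm x) A
  · refine ⟨⟨infDist (Φ tm x) A, hpos, fun t ht => hmin t ht⟩, ?_⟩
    intro t ht hmem
    have h0 : infDist (Φ t x) A = 0 := infDist_zero_of_mem hmem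
    have := hmin t ht
    rw [h0] at this
    exact absurd (lt_of_lt_of_le hpos this) (lt_irrefl 0)
  · exfalso
    have hftm : infDist (Φ tm x) A = 0 :=
      le_antisymm (not_lt.mp hpos) infDist_nonneg
    -- first hitting time of `A`
    set Z : Set ℝ := Icc (0:ℝ) T ∩ (fun t => infDist (Φ t x) A) ⁻¹' {0} with hZ_def
    have hZne : Z.Nonempty := ⟨tm, htm, by simp [hftm]⟩
    have hZcl : IsClosed Z :=
      hfc.preimage_isClosed_of_isClosed isClosed_Icc isClosed_singleton
    have hZbdd : BddBelow Z := ⟨0, fun z hz => hz.1.1⟩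
    set T₀ : ℝ := sInf Z with hT₀_def
    have hT₀mem : T₀ ∈ Z := hZcl.csInf_mem hZne hZbdd
    have hT₀Icc : T₀ ∈ Icc (0:ℝ) T := hT₀mem.1
    have hfT₀ : infDist (Φ T₀ x) A = 0 := hT₀mem.2
    have hf0r : r₀ ≤ infDist (Φ 0 x) A := by rw [hΦ0]; exact hxr
    have hT₀pos : 0 < T₀ := by
      rcases hT₀Icc.1.lt_or_eq with h | h
      · exact h
      · exfalso; rw [← h] at hfT₀; rw [hfT₀] at hf0r; linarith
    have hfpos : ∀ t, 0 ≤ t → t < T₀ → 0 < infDist (Φ t x) A := by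
      intro t ht0 htT
      rcases (infDist_nonneg : 0 ≤ infDist (Φ t x) A).lt_or_eq with h | h
      · exact h
      · exfalso
        have htZ : t ∈ Z := ⟨⟨ht0, le_trans htT.le hT₀Icc.2⟩, by simp [← h]⟩
        exact absurd (csInf_le hZbdd htZ) (not_le.mpr htT)
    -- dyadic radii
    set r : ℕ → ℝ := fun n => r₀ * (1/2)^n with hr_def
    have hrpos : ∀ n, 0 < r n := fun n => mul_pos hr₀ (by positivity)
    have hrle : ∀ n, r n ≤ r₀ := by
      intro n
      rw [hr_def]
      have h1 : ((1:ℝ)/2)^n ≤ 1 := pow_le_one₀ (by norm_num) (by norm_num)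
      nlinarith
    have hrsucc : ∀ n, r (n+1) = r n / 2 := by
      intro n; rw [hr_def]; simp [pow_succ]; ring
    have hr0eq : r 0 = r₀ := by simp [hr_def]
    -- last-exit times `b n` and subsequent first-hitting times `c n`
    set b : ℕ → ℝ := fun n => sSup {t | t ∈ Icc (0:ℝ) T₀ ∧ r n ≤ infDist (Φ t x) A}
      with hb_def
    set c : ℕ → ℝ := fun n =>
      sInf {t | t ∈ Icc (b n) T₀ ∧ infDist (Φ t x) A = r (n+1)} with hc_def
    have hfcT₀ : ContinuousOn (fun t => infDist (Φ t x) A) (Icc (0:ℝ) T₀) :=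
      hfc.mono (Icc_subset_Icc le_rfl hT₀Icc.2)
    have hBcl : ∀ n, IsClosed {t | t ∈ Icc (0:ℝ) T₀ ∧ r n ≤ infDist (Φ t x) A} := by
      intro n
      have : {t | t ∈ Icc (0:ℝ) T₀ ∧ r n ≤ infDist (Φ t x) A}
          = Icc (0:ℝ) T₀ ∩ (fun t => infDist (Φ t x) A) ⁻¹' (Ici (r n)) := rfl
      rw [this]
      exact hfcT₀.preimage_isClosed_of_isClosed isClosed_Icc isClosed_Ici
    have hBne : ∀ n, (0:ℝ) ∈ {t | t ∈ Icc (0:ℝ) T₀ ∧ r n ≤ infDist (Φ t x) A} :=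
      fun n => ⟨⟨le_rfl, hT₀pos.le⟩, le_trans (hrle n) hf0r⟩
    have hBbdd : ∀ n, BddAbove {t | t ∈ Icc (0:ℝ) T₀ ∧ r n ≤ infDist (Φ t x) A} :=
      fun n => ⟨T₀, fun t ht => ht.1.2⟩
    have hbmem : ∀ n, b n ∈ Icc (0:ℝ) T₀ ∧ r n ≤ infDist (Φ (b n) x) A := by
      intro n
      have := (hBcl n).csSup_mem ⟨0, hBne n⟩ (hBbdd n)
      exact this
    have hbT : ∀ n, b n < T₀ := by
      intro n
      rcases (hbmem n).1.2.lt_or_eq with h | h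
      · exact h
      · exfalso
        have := (hbmem n).2
        rw [h, hfT₀] at this
        linarith [hrpos n]
    have hblt : ∀ n, ∀ t, b n < t → t ≤ T₀ → infDist (Φ t x) A < r n := by
      intro n t h1 h2
      by_contra h
      push_neg at h
      have htB : t ∈ {t | t ∈ Icc (0:ℝ) T₀ ∧ r n ≤ infDist (Φ t x) A} :=
        ⟨⟨le_trans (hbmem n).1.1 h1.le, h2⟩, h⟩
      exact absurd (le_csSup (hBbdd n) htB) (not_le.mpr h1)
    have hCne : ∀ n, {t | t ∈ Icc (b n) T₀ ∧ infDist (Φ t x) A = r (n+1)}.Nonempty := by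
      intro n
      have hsub : Icc (b n) T₀ ⊆ Icc (0:ℝ) T :=
        Icc_subset_Icc (hbmem n).1.1 hT₀Icc.2
      have hiv := intermediate_value_Icc' (hbT n).le (hfc.mono hsub)
      have hmem2 : r (n+1) ∈ Icc (infDist (Φ T₀ x) A) (infDist (Φ (b n) x) A) := by
        constructor
        · rw [hfT₀]; exact (hrpos (n+1)).le
        · have h1 := hrsucc n
          have h2 := hrpos n
          have h3 := (hbmem n).2
          linarith
      obtain ⟨t, ht, hft⟩ := hiv hmem2
      exact ⟨t, ht, hft⟩
    have hCcl : ∀ n, IsClosed {t | t ∈ Icc (b n) T₀ ∧ infDist (Φ t x) A = r (n+1)} := by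
      intro n
      have hsub : Icc (b n) T₀ ⊆ Icc (0:ℝ) T :=
        Icc_subset_Icc (hbmem n).1.1 hT₀Icc.2
      have : {t | t ∈ Icc (b n) T₀ ∧ infDist (Φ t x) A = r (n+1)}
          = Icc (b n) T₀ ∩ (fun t => infDist (Φ t x) A) ⁻¹' {r (n+1)} := rfl
      rw [this]
      exact (hfc.mono hsub).preimage_isClosed_of_isClosed isClosed_Icc isClosed_singleton
    have hcmem : ∀ n, c n ∈ Icc (b n) T₀ ∧ infDist (Φ (c n) x) A = r (n+1) := by
      intro n
      exact (hCcl n).csInf_mem (hCne n) ⟨b n, fun t ht => ht.1.1⟩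
    have hbc : ∀ n, b n < c n := by
      intro n
      rcases (hcmem n).1.1.lt_or_eq with h | h
      · exact h
      · exfalso
        have h2 := (hcmem n).2
        rw [← h] at h2
        have h3 := (hbmem n).2
        have h4 := hrsucc n
        have h5 := hrpos n
        rw [h2] at h3
        linarith
    have hcT : ∀ n, c n < T₀ := by
      intro n
      rcases (hcmem n).1.2.lt_or_eq with h | h
      · exact h
      · exfalso
        have h2 := (hcmem n).2
        rw [h, hfT₀] at h2
        exact absurd h2.symm (hrpos (n+1)).ne'
    have hcb : ∀ n, c n ≤ b (n+1) := by
      intro n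
      refine le_csSup (hBbdd (n+1)) ?_
      exact ⟨⟨le_trans (hbmem n).1.1 (hbc n).le, (hcmem n).1.2⟩, le_of_eq (hcmem n).2.symm⟩
    have hb_mono : Monotone b := monotone_nat_of_le_succ fun n => le_trans (hbc n).le (hcb n)
    have hcbmn : ∀ m n, m < n → c m ≤ b n := fun m n h => le_trans (hcb m) (hb_mono h)
    have hEsub : ∀ n, Ioc (b n) (c n) ⊆ Icc (0:ℝ) T := by
      intro n t ht
      exact ⟨le_trans (hbmem n).1.1 ht.1.le,
        le_trans ht.2 (le_trans (hcmem n).1.2 hT₀Icc.2)⟩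
    -- the per-interval lower bound
    have hIn : ∀ n, ENNReal.ofReal (1/2)
        ≤ ∫⁻ t in Ioc (b n) (c n), β t (Φ t x) * H (Φ t x) ∂volume := by
      intro n
      have hIvn : IntegrableOn v (Ioc (b n) (c n)) volume :=
        hIv.mono_set (fun t ht => hEsub n ht)
      have hInt_abs : IntegrableOn (fun t => |v t|) (Ioc (b n) (c n)) volume := hIvn.abs
      have hbIcc : b n ∈ Icc (0:ℝ) T :=
        ⟨(hbmem n).1.1, le_trans (hbmem n).1.2 hT₀Icc.2⟩
      have hcIcc : c n ∈ Icc (0:ℝ) T :=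
        ⟨le_trans (hbmem n).1.1 (hbc n).le, le_trans (hcmem n).1.2 hT₀Icc.2⟩
      have hint0b : IntervalIntegrable v volume 0 (b n) := by
        refine hv_int.mono_set ?_
        rw [uIcc_of_le hT0, uIcc_of_le hbIcc.1]
        exact Icc_subset_Icc le_rfl hbIcc.2
      have hint0c : IntervalIntegrable v volume 0 (c n) := by
        refine hv_int.mono_set ?_
        rw [uIcc_of_le hT0, uIcc_of_le hcIcc.1]
        exact Icc_subset_Icc le_rfl hcIcc.2
      have heq : ∫ t in (b n)..(c n), v t
          = infDist (Φ (c n) x) A - infDist (Φ (b n) x) A := by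
        have h1 := hv_eq (b n) hbIcc
        have h2 := hv_eq (c n) hcIcc
        have h3 := intervalIntegral.integral_interval_sub_left hint0c hint0b
        rw [h1, h2]
        linarith [h3]
      have hvar : r n / 2 ≤ ∫ t in Ioc (b n) (c n), |v t| := by
        have habs : |∫ t in (b n)..(c n), v t| ≤ ∫ t in (b n)..(c n), |v t| :=
          intervalIntegral.abs_integral_le_integral_abs (hbc n).le
        have h5 : ∫ t in (b n)..(c n), |v t| = ∫ t in Ioc (b n) (c n), |v t| :=
          intervalIntegral.integral_of_le (hbc n).le
        have h6 : r n / 2 ≤ |∫ t in (b n)..(c n), v t| := by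
          rw [heq, abs_sub_comm]
          have h7 : r n / 2 ≤ infDist (Φ (b n) x) A - infDist (Φ (c n) x) A := by
            rw [(hcmem n).2, hrsucc n]
            linarith [(hbmem n).2]
          exact le_trans h7 (le_abs_self _)
        rw [← h5]
        exact le_trans h6 habs
      -- pointwise a.e. comparison on the interval
      have hae_le : ∀ᵐ t ∂(volume.restrict (Ioc (b n) (c n))),
          ENNReal.ofReal |v t| ≤ β t (Φ t x) :=
        ae_restrict_of_ae_restrict_of_subset (hEsub n) hv_le
      have hptw : ∀ᵐ t ∂(volume.restrict (Ioc (b n) (c n))),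
          ENNReal.ofReal |v t| * (ENNReal.ofReal (r n))⁻¹ ≤ β t (Φ t x) * H (Φ t x) := by
        filter_upwards [hae_le, ae_restrict_mem measurableSet_Ioc] with t h1 h2
        have htIcc : t ∈ Icc (0:ℝ) T := hEsub n h2
        have hflt : infDist (Φ t x) A < r n :=
          hblt n t h2.1 (le_trans h2.2 (hcmem n).1.2)
        have hfle : infDist (Φ t x) A ≤ r₀ := le_trans hflt.le (hrle n)
        have hmemS : Φ t x ∈ S := ⟨hxB t htIcc, hfle⟩
        have hHt : (ENNReal.ofReal (r n))⁻¹ ≤ H (Φ t x) := by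
          rw [hH_def, indicator_of_mem hmemS]
          exact ENNReal.inv_le_inv' (ENNReal.ofReal_le_ofReal hflt.le)
        exact mul_le_mul' h1 hHt
      have hrn_inv_ne : (ENNReal.ofReal (r n))⁻¹ ≠ ⊤ :=
        ENNReal.inv_ne_top.mpr (ENNReal.ofReal_pos.mpr (hrpos n)).ne'
      calc ENNReal.ofReal (1/2)
          = ENNReal.ofReal (r n / 2) * (ENNReal.ofReal (r n))⁻¹ := by
            have h1 : (1:ℝ)/2 = (r n / 2) / r n := by
              have := (hrpos n).ne'
              field_simp
            rw [h1, ENNReal.ofReal_div_of_pos (hrpos n), div_eq_mul_inv]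
        _ ≤ ENNReal.ofReal (∫ t in Ioc (b n) (c n), |v t|) * (ENNReal.ofReal (r n))⁻¹ :=
            mul_le_mul_left (ENNReal.ofReal_le_ofReal hvar) _
        _ = (∫⁻ t in Ioc (b n) (c n), ENNReal.ofReal |v t| ∂volume)
              * (ENNReal.ofReal (r n))⁻¹ := by
            rw [ofReal_integral_eq_lintegral_ofReal hInt_abs
              (Filter.Eventually.of_forall fun t => abs_nonneg _)]
        _ = ∫⁻ t in Ioc (b n) (c n),
              ENNReal.ofReal |v t| * (ENNReal.ofReal (r n))⁻¹ ∂volume :=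
            (lintegral_mul_const' _ _ hrn_inv_ne).symm
        _ ≤ ∫⁻ t in Ioc (b n) (c n), β t (Φ t x) * H (Φ t x) ∂volume :=
            lintegral_mono_ae hptw
    -- `x` belongs to `E`
    have hxE : x ∈ E := by
      obtain ⟨qr, hq1, hq2⟩ := exists_rat_btwn (hbc 0)
      have hqT₀ : (qr:ℝ) ≤ T₀ := le_trans hq2.le (hcmem 0).1.2
      have hqIcc : (qr:ℝ) ∈ Icc (0:ℝ) T :=
        ⟨le_trans (hbmem 0).1.1 hq1.le, le_trans hqT₀ hT₀Icc.2⟩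
      have hfq : infDist (Φ (qr:ℝ) x) A < r 0 := hblt 0 _ hq1 hqT₀
      have hSq : Φ (qr:ℝ) x ∈ S := by
        refine ⟨hxB _ hqIcc, ?_⟩
        have : infDist (Φ (qr:ℝ) x) A ≤ r₀ := by rw [← hr0eq]; exact hfq.le
        exact this
      rw [hE_def]
      exact mem_iUnion.mpr ⟨qr, by rw [if_pos hqIcc]; exact hSq⟩
    -- `G x = ⊤`
    have hGx : G x = ⊤ := by
      by_contra hne
      have hhalf_ne : ENNReal.ofReal (1/2) ≠ 0 := by
        simp [ENNReal.ofReal_eq_zero]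
      obtain ⟨N, hN⟩ := ENNReal.exists_nat_gt
        (ENNReal.div_lt_top hne hhalf_ne).ne
      have hsum : (N:ℝ≥0∞) * ENNReal.ofReal (1/2) ≤ G x := by
        have hkey : ∀ m n, m < n →
            Disjoint (Ioc (b m) (c m)) (Ioc (b n) (c n)) := by
          intro m n h
          rw [Set.disjoint_left]
          intro t ht1 ht2
          exact absurd (lt_of_le_of_lt (le_trans ht1.2 (hcbmn m n h)) ht2.1) (lt_irrefl t)
        have hdisj : Set.PairwiseDisjoint (↑(Finset.range N))
            (fun n => Ioc (b n) (c n)) := by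
          intro m hm n hn hmn
          rcases hmn.lt_or_gt with h | h
          · exact hkey m n h
          · exact (hkey n m h).symm
        calc (N:ℝ≥0∞) * ENNReal.ofReal (1/2)
            = ∑ n ∈ Finset.range N, ENNReal.ofReal (1/2) := by
              rw [Finset.sum_const, Finset.card_range, nsmul_eq_mul]
          _ ≤ ∑ n ∈ Finset.range N,
                ∫⁻ t in Ioc (b n) (c n), β t (Φ t x) * H (Φ t x) ∂volume :=
              Finset.sum_le_sum fun n _ => hIn n
          _ = ∫⁻ t in ⋃ n ∈ Finset.range N, Ioc (b n) (c n),
                β t (Φ t x) * H (Φ t x) ∂volume :=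
              (lintegral_biUnion_finset hdisj (fun n _ => measurableSet_Ioc) _).symm
          _ ≤ G x := by
              rw [hG_def]
              refine lintegral_mono_set ?_
              intro t ht
              rw [mem_iUnion₂] at ht
              obtain ⟨n, _, hn⟩ := ht
              exact hEsub n hn
      have hlt : G x < (N:ℝ≥0∞) * ENNReal.ofReal (1/2) := by
        rw [ENNReal.div_lt_iff (Or.inl hhalf_ne) (Or.inl ENNReal.ofReal_ne_top)] at hN
        exact hN
      exact absurd hsum (not_le.mpr hlt)
    exact hx2 ⟨hGx, hxE⟩
end

section
/- Let n ≥ 1, let F : ℝⁿ → ℝⁿ be differentiable at a point x ∈ ℝⁿ with differential DF(x), and let E ⊆ ℝⁿ be a Lebesgue-measurable set with x ∈ E having Lebesgue density 1 at x, i.e. |E ∩ B_r(x)| / |B_r(x)| → 1 as r → 0. Then limsup_{y ∈ E, y → x} ‖F(y) − F(x)‖ / ‖y − x‖ = ‖DF(x)‖ (the operator norm of DF(x)), and liminf_{y ∈ E, y → x} ‖F(y) − F(x)‖ / ‖y − x‖ = inf_{‖v‖ = 1} ‖DF(x) v‖, where ‖·‖ denotes the Euclidean norm on ℝⁿ. 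-/
open MeasureTheory Set ENNReal Filter Metric
open Pointwise

lemma cone_exists {n : ℕ} (x : EuclideanSpace ℝ (Fin n))
    (S : Set (EuclideanSpace ℝ (Fin n)))
    (hdens : Tendsto (fun r : ℝ => volume (S ∩ ball x r) / volume (ball x r))
      (nhdsWithin 0 (Ioi 0)) (nhds 1))
    (v : EuclideanSpace ℝ (Fin n)) (hv : ‖v‖ = 1) {δ r : ℝ} (hδ : 0 < δ) (hr : 0 < r) :
    ∃ y ∈ S, y ≠ x ∧ dist y x < r ∧ ‖‖y - x‖⁻¹ • (y - x) - v‖ < δ := by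
  have hvnt : Nontrivial (EuclideanSpace ℝ (Fin n)) :=
    nontrivial_of_ne v 0 (by simp [← norm_pos_iff, hv])
  by_contra hcon
  push_neg at hcon
  set C : Set (EuclideanSpace ℝ (Fin n)) := {u | u ≠ 0 ∧ ‖‖u‖⁻¹ • u - v‖ < δ} with hC
  have hCopen : IsOpen C := by
    have hcont : ContinuousOn (fun u : EuclideanSpace ℝ (Fin n) => ‖u‖⁻¹ • u)
        {u : EuclideanSpace ℝ (Fin n) | u ≠ 0} :=
      (continuous_norm.continuousOn.inv₀ fun u hu => norm_ne_zero_iff.2 hu).smul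
        continuous_id.continuousOn
    have : C = {u : EuclideanSpace ℝ (Fin n) | u ≠ 0} ∩
        (fun u => ‖u‖⁻¹ • u) ⁻¹' ball v δ := by
      ext u; simp [hC, mem_ball, dist_eq_norm]
    rw [this]
    exact hcont.isOpen_inter_preimage isOpen_ne isOpen_ball
  have hmemC : ∀ (c : ℝ), 0 < c → ∀ u, u ∈ C → c • u ∈ C := by
    intro c hc u ⟨hu0, hud⟩
    refine ⟨smul_ne_zero (ne_of_gt hc) hu0, ?_⟩
    have hnorm : ‖c • u‖ = c * ‖u‖ := by
      rw [norm_smul, Real.norm_eq_abs, abs_of_pos hc]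
    have : ‖c • u‖⁻¹ • (c • u) = ‖u‖⁻¹ • u := by
      rw [hnorm, mul_inv, smul_smul, mul_assoc, mul_comm _ c, ← mul_assoc,
        inv_mul_cancel₀ (ne_of_gt hc), one_mul]
    rwa [this]
  have hscale : ∀ (c : ℝ), 0 < c → C ∩ ball 0 c = c • (C ∩ ball (0 : EuclideanSpace ℝ (Fin n)) 1) := by
    intro c hc
    ext u
    constructor
    · rintro ⟨huC, hub⟩
      refine ⟨c⁻¹ • u, ⟨hmemC c⁻¹ (by positivity) u huC, ?_⟩, ?_⟩
      · rw [mem_ball_zero_iff, norm_smul, Real.norm_eq_abs, abs_of_pos (by positivity)]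
        rw [mem_ball_zero_iff] at hub
        rw [inv_mul_lt_iff₀ hc, mul_one]; exact hub
      · show c • c⁻¹ • u = u
        rw [smul_smul, mul_inv_cancel₀ (ne_of_gt hc), one_smul]
    · rintro ⟨w, ⟨hwC, hwb⟩, rfl⟩
      refine ⟨hmemC c hc w hwC, ?_⟩
      rw [mem_ball_zero_iff] at hwb ⊢
      rw [norm_smul, Real.norm_eq_abs, abs_of_pos hc]
      calc c * ‖w‖ < c * 1 := by exact mul_lt_mul_of_pos_left hwb hc
        _ = c := mul_one c
  set κ : ℝ≥0∞ := volume (C ∩ ball (0 : EuclideanSpace ℝ (Fin n)) 1) with hκ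
  have hκpos : 0 < κ := by
    refine (hCopen.inter isOpen_ball).measure_pos volume ?_
    refine ⟨(1/2 : ℝ) • v, ⟨?_, ?_⟩, ?_⟩
    · exact smul_ne_zero (by norm_num) (by simp [← norm_pos_iff, hv])
    · have : ‖(1/2 : ℝ) • v‖ = 1/2 := by
        rw [norm_smul, Real.norm_eq_abs, hv]; norm_num
      rw [this]
      have : ((1:ℝ)/2)⁻¹ • (1/2 : ℝ) • v = v := by
        rw [smul_smul]; norm_num
      rw [this]; simpa using hδ
    · rw [mem_ball_zero_iff, norm_smul, Real.norm_eq_abs, hv, mul_one]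
      rw [abs_of_pos] <;> norm_num
  set B1 : ℝ≥0∞ := volume (ball (0 : EuclideanSpace ℝ (Fin n)) 1) with hB1
  have hB1pos : 0 < B1 := measure_ball_pos volume 0 one_pos
  have hB1fin : B1 ≠ ∞ := measure_ball_lt_top.ne
  set c : ℝ≥0∞ := κ / B1 with hc
  have hcpos : 0 < c := ENNReal.div_pos (ne_of_gt hκpos) hB1fin
  have hcfin : c ≠ ∞ := by
    rw [hc]
    exact (ENNReal.div_lt_top (by
      exact (lt_of_le_of_lt (measure_mono inter_subset_right) measure_ball_lt_top).ne)
      (ne_of_gt hB1pos)).ne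
  -- key eventual bound
  have hev : ∀ᶠ r' in nhdsWithin (0:ℝ) (Ioi 0),
      volume (S ∩ ball x r') / volume (ball x r') + c ≤ 1 := by
    filter_upwards [Ioc_mem_nhdsGT_of_mem ⟨le_refl (0:ℝ), hr⟩] with r' hr'
    obtain ⟨hr'0, hr'r⟩ := hr'
    set A : Set (EuclideanSpace ℝ (Fin n)) := (fun y => y - x) ⁻¹' (C ∩ ball 0 r') with hA
    have hAsub : A ⊆ ball x r' := by
      intro y hy
      rw [mem_ball, dist_eq_norm]
      exact mem_ball_zero_iff.1 hy.2
    have hAdisj : Disjoint (S ∩ ball x r') A := by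
      rw [disjoint_left]
      rintro y ⟨hyS, hyb⟩ ⟨⟨hy0, hyδ⟩, hyb'⟩
      have hyx : y ≠ x := by
        intro h; apply hy0; rw [h]; simp
      have : dist y x < r := lt_of_lt_of_le (by
        rw [dist_eq_norm]; exact mem_ball_zero_iff.1 hyb') hr'r
      exact absurd hyδ (not_lt.2 (hcon y hyS hyx this))
    have hAmeas : MeasurableSet A :=
      ((hCopen.inter isOpen_ball).preimage (continuous_id.sub continuous_const)).measurableSet
    have hvolA : volume A = ENNReal.ofReal (r' ^ n) * κ := by
      have heq : A = (fun y => y + (-x)) ⁻¹' (C ∩ ball 0 r') := by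
        simp [hA, sub_eq_add_neg]
      rw [heq, measure_preimage_add_right, hscale r' hr'0,
        Measure.addHaar_smul_of_nonneg volume (le_of_lt hr'0), finrank_euclideanSpace_fin]
    have hvolB : volume (ball x r') = ENNReal.ofReal (r' ^ n) * B1 := by
      rw [Measure.addHaar_ball volume x hr'0.le, finrank_euclideanSpace_fin]
    have hunion : volume (S ∩ ball x r') + volume A ≤ volume (ball x r') := by
      rw [← measure_union hAdisj hAmeas]
      exact measure_mono (union_subset inter_subset_right hAsub)
    have hBne0 : volume (ball x r') ≠ 0 := (measure_ball_pos volume x hr'0).ne'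
    have hBnetop : volume (ball x r') ≠ ∞ := measure_ball_lt_top.ne
    have : volume (S ∩ ball x r') / volume (ball x r') + volume A / volume (ball x r')
        ≤ 1 := by
      rw [← ENNReal.add_div]
      exact ENNReal.div_le_of_le_mul (by rwa [one_mul])
    have hAc : volume A / volume (ball x r') = c := by
      rw [hvolA, hvolB, hc, ENNReal.mul_div_mul_left _ _
        (ENNReal.ofReal_pos.2 (by positivity)).ne' ENNReal.ofReal_ne_top]
    rwa [hAc] at this
  have hev' : ∀ᶠ r' in nhdsWithin (0:ℝ) (Ioi 0),
      volume (S ∩ ball x r') / volume (ball x r') ≤ 1 - c := by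
    filter_upwards [hev] with r' h
    exact ENNReal.le_sub_of_add_le_right hcfin h
  have hle : (1 : ℝ≥0∞) ≤ 1 - c := le_of_tendsto hdens hev'
  have hlt : (1 : ℝ≥0∞) - c < 1 := ENNReal.sub_lt_self one_ne_top one_ne_zero hcpos.ne'
  exact absurd (lt_of_le_of_lt hle hlt) (lt_irrefl _)

/-- **Approximate slopes of a differentiable map on Euclidean space** (Remark 1.5 of
the paper).  Let `n ≥ 1`, let `F : ℝⁿ → ℝⁿ` be differentiable at `x` with
differential `DF(x)`, and let `S` be a Lebesgue-measurable set containing `x` with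
Lebesgue density `1` at `x`.  Then the limsup of `‖F(y) - F(x)‖ / ‖y - x‖` as
`y → x` within `S \ {x}` equals the operator norm `‖DF(x)‖`, and the liminf equals
`inf_{‖v‖ = 1} ‖DF(x) v‖`. -/
theorem approximate_slopes_of_differentiable_map
    (n : ℕ) (hn : 1 ≤ n)
    (F : EuclideanSpace ℝ (Fin n) → EuclideanSpace ℝ (Fin n))
    (x : EuclideanSpace ℝ (Fin n))
    (Df : EuclideanSpace ℝ (Fin n) →L[ℝ] EuclideanSpace ℝ (Fin n))
    (hF : HasFDerivAt F Df x)
    (S : Set (EuclideanSpace ℝ (Fin n))) (hS : MeasurableSet S) (hxS : x ∈ S)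
    (hdens : Tendsto (fun r : ℝ => volume (S ∩ ball x r) / volume (ball x r))
      (nhdsWithin 0 (Ioi 0)) (nhds 1)) :
    limsup (fun y => ‖F y - F x‖ / ‖y - x‖) (nhdsWithin x (S \ {x})) = ‖Df‖
      ∧ liminf (fun y => ‖F y - F x‖ / ‖y - x‖) (nhdsWithin x (S \ {x}))
          = ⨅ v : sphere (0 : EuclideanSpace ℝ (Fin n)) 1, ‖Df v‖ := by
  haveI : Nontrivial (EuclideanSpace ℝ (Fin n)) :=
    Module.nontrivial_of_finrank_pos (R := ℝ)
      (by rw [finrank_euclideanSpace_fin]; omega)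
  set l := nhdsWithin x (S \ {x}) with hl
  set q : EuclideanSpace ℝ (Fin n) → ℝ := fun y => ‖F y - F x‖ / ‖y - x‖ with hq
  have hsphne : (sphere (0 : EuclideanSpace ℝ (Fin n)) 1).Nonempty :=
    NormedSpace.sphere_nonempty.2 zero_le_one
  have hcontDf : ContinuousOn (fun u => ‖Df u‖)
      (sphere (0 : EuclideanSpace ℝ (Fin n)) 1) :=
    (Df.continuous.norm).continuousOn
  obtain ⟨v₀, hv₀mem, hv₀max⟩ := (isCompact_sphere _ _).exists_isMaxOn hsphne hcontDf
  obtain ⟨v₁, hv₁mem, hv₁min⟩ := (isCompact_sphere _ _).exists_isMinOn hsphne hcontDf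
  have hv₀ : ‖v₀‖ = 1 := by simpa using hv₀mem
  have hv₁ : ‖v₁‖ = 1 := by simpa using hv₁mem
  have hM0 : (0:ℝ) ≤ ‖Df‖ := norm_nonneg _
  have hdir : ∀ y : EuclideanSpace ℝ (Fin n), y ≠ x → ‖‖y - x‖⁻¹ • (y - x)‖ = 1 := by
    intro y hyx
    have ht : 0 < ‖y - x‖ := by rwa [norm_pos_iff, sub_ne_zero]
    rw [norm_smul, Real.norm_eq_abs, abs_of_pos (inv_pos.2 ht), inv_mul_cancel₀ ht.ne']
  have hM : ‖Df v₀‖ = ‖Df‖ := by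
    refine le_antisymm (by simpa [hv₀] using Df.le_opNorm v₀) ?_
    refine Df.opNorm_le_bound (norm_nonneg _) fun u => ?_
    rcases eq_or_ne u 0 with rfl | hu
    · simp
    · have htu : 0 < ‖u‖ := norm_pos_iff.2 hu
      have hmem : ‖u‖⁻¹ • u ∈ sphere (0 : EuclideanSpace ℝ (Fin n)) 1 := by
        rw [mem_sphere_zero_iff_norm, norm_smul, Real.norm_eq_abs,
          abs_of_pos (inv_pos.2 htu), inv_mul_cancel₀ htu.ne']
      have hle := isMaxOn_iff.1 hv₀max _ hmem
      have heq : ‖Df (‖u‖⁻¹ • u)‖ = ‖u‖⁻¹ * ‖Df u‖ := by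
        rw [Df.map_smul, norm_smul, Real.norm_eq_abs, abs_of_pos (inv_pos.2 htu)]
      rw [heq] at hle
      calc ‖Df u‖ = ‖u‖ * (‖u‖⁻¹ * ‖Df u‖) := by field_simp
        _ ≤ ‖u‖ * ‖Df v₀‖ := mul_le_mul_of_nonneg_left hle htu.le
        _ = ‖Df v₀‖ * ‖u‖ := mul_comm _ _
  haveI : Nonempty (sphere (0 : EuclideanSpace ℝ (Fin n)) 1) := hsphne.to_subtype
  have hm : (⨅ v : sphere (0 : EuclideanSpace ℝ (Fin n)) 1, ‖Df v‖) = ‖Df v₁‖ := by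
    refine le_antisymm (ciInf_le ⟨0, ?_⟩ (⟨v₁, hv₁mem⟩ : sphere (0 : EuclideanSpace ℝ (Fin n)) 1))
      (le_ciInf fun w => isMinOn_iff.1 hv₁min _ w.2)
    rintro a ⟨w, rfl⟩
    exact norm_nonneg _
  -- key eventual estimate
  have hkey : ∀ ε : ℝ, 0 < ε → ∀ᶠ y in l, y ∈ S \ {x} ∧
      |q y - ‖Df (‖y - x‖⁻¹ • (y - x))‖| ≤ ε := by
    intro ε hε
    have ho' : ∀ᶠ y in l, ‖F y - F x - Df (y - x)‖ ≤ ε * ‖y - x‖ :=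
      (hF.isLittleO.def hε).filter_mono nhdsWithin_le_nhds
    filter_upwards [ho', self_mem_nhdsWithin] with y hy hyS
    refine ⟨hyS, ?_⟩
    have hyx : y ≠ x := by simpa using hyS.2
    have ht : 0 < ‖y - x‖ := by rwa [norm_pos_iff, sub_ne_zero]
    have h1 : ‖Df (‖y - x‖⁻¹ • (y - x))‖ = ‖Df (y - x)‖ / ‖y - x‖ := by
      rw [Df.map_smul, norm_smul, Real.norm_eq_abs, abs_of_pos (inv_pos.2 ht), inv_mul_eq_div]
    show |‖F y - F x‖ / ‖y - x‖ - ‖Df (‖y - x‖⁻¹ • (y - x))‖| ≤ ε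
    rw [h1, div_sub_div_same, abs_div, abs_of_pos ht, div_le_iff₀ ht]
    calc |‖F y - F x‖ - ‖Df (y - x)‖| ≤ ‖F y - F x - Df (y - x)‖ :=
          abs_norm_sub_norm_le _ _
      _ ≤ ε * ‖y - x‖ := hy
  haveI hNB : l.NeBot := by
    rw [hl, ← mem_closure_iff_nhdsWithin_neBot, Metric.mem_closure_iff]
    intro ε hε
    obtain ⟨y, hyS, hyx, hyd, -⟩ := cone_exists x S hdens v₀ hv₀ one_pos hε
    exact ⟨y, ⟨hyS, by simpa using hyx⟩, by rwa [dist_comm]⟩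
  have hfreq : ∀ v : EuclideanSpace ℝ (Fin n), ‖v‖ = 1 → ∀ δ : ℝ, 0 < δ →
      ∃ᶠ y in l, y ≠ x ∧ ‖‖y - x‖⁻¹ • (y - x) - v‖ < δ := by
    intro v hv δ hδ
    by_contra hno
    rw [not_frequently, hl, eventually_nhdsWithin_iff, Metric.eventually_nhds_iff] at hno
    obtain ⟨ε, hε, h'⟩ := hno
    obtain ⟨y, hyS, hyx, hyd, hyδ⟩ := cone_exists x S hdens v hv hδ hε
    exact h' hyd ⟨hyS, by simpa using hyx⟩ ⟨hyx, hyδ⟩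
  have hboundAbove : IsBoundedUnder (· ≤ ·) l q := by
    refine ⟨‖Df‖ + 1, eventually_map.2 ?_⟩
    filter_upwards [hkey 1 one_pos] with y hy
    obtain ⟨hyS, hy2⟩ := hy
    have hyx : y ≠ x := by simpa using hyS.2
    have hle : ‖Df (‖y - x‖⁻¹ • (y - x))‖ ≤ ‖Df‖ := by
      simpa [hdir y hyx] using Df.le_opNorm (‖y - x‖⁻¹ • (y - x))
    have := abs_le.1 hy2
    linarith [this.2]
  have hboundBelow : IsBoundedUnder (· ≥ ·) l q :=
    ⟨0, eventually_map.2 (Eventually.of_forall fun y =>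
      div_nonneg (norm_nonneg _) (norm_nonneg _))⟩
  have hlimsup_le : limsup q l ≤ ‖Df‖ := by
    refine le_of_forall_pos_le_add fun ε hε => ?_
    refine limsup_le_of_le hboundBelow.isCoboundedUnder_le ?_
    filter_upwards [hkey ε hε] with y hy
    obtain ⟨hyS, hy2⟩ := hy
    have hyx : y ≠ x := by simpa using hyS.2
    have hle : ‖Df (‖y - x‖⁻¹ • (y - x))‖ ≤ ‖Df‖ := by
      simpa [hdir y hyx] using Df.le_opNorm (‖y - x‖⁻¹ • (y - x))
    have := abs_le.1 hy2
    linarith [this.2]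
  have hδaux : ∀ ε : ℝ, 0 < ε → ∀ u w : EuclideanSpace ℝ (Fin n),
      ‖u - w‖ < ε / (2 * (‖Df‖ + 1)) → |‖Df u‖ - ‖Df w‖| ≤ ε / 2 := by
    intro ε hε u w hd
    have h1 : |‖Df u‖ - ‖Df w‖| ≤ ‖Df u - Df w‖ := abs_norm_sub_norm_le _ _
    have h2 : ‖Df u - Df w‖ ≤ ‖Df‖ * ‖u - w‖ := by
      rw [← map_sub]; exact Df.le_opNorm _
    have h3 : ‖Df‖ * ‖u - w‖ ≤ ‖Df‖ * (ε / (2 * (‖Df‖ + 1))) :=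
      mul_le_mul_of_nonneg_left hd.le hM0
    have h4 : ‖Df‖ * (ε / (2 * (‖Df‖ + 1))) ≤ (‖Df‖ + 1) * (ε / (2 * (‖Df‖ + 1))) :=
      mul_le_mul_of_nonneg_right (by linarith) (by positivity)
    have h5 : (‖Df‖ + 1) * (ε / (2 * (‖Df‖ + 1))) = ε / 2 := by
      field_simp
    linarith
  have hlimsup_ge : ‖Df‖ ≤ limsup q l := by
    refine le_of_forall_pos_le_add fun ε hε => ?_
    have hδpos : 0 < ε / (2 * (‖Df‖ + 1)) := by positivity
    have hfr2 := (hfreq v₀ hv₀ _ hδpos).and_eventually (hkey (ε/2) (by positivity))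
    have hfq : ∃ᶠ y in l, ‖Df‖ - ε ≤ q y := by
      refine hfr2.mono ?_
      rintro y ⟨⟨hyx, hyδ⟩, hyS, hy2⟩
      have h1 := hδaux ε hε _ _ hyδ
      have h4 := abs_le.1 hy2
      have h5 := abs_le.1 h1
      rw [hM] at h5
      linarith [h4.1, h5.1]
    have := le_limsup_of_frequently_le hfq hboundAbove
    linarith
  have hliminf_ge : ‖Df v₁‖ ≤ liminf q l := by
    refine le_of_forall_pos_le_add fun ε hε => ?_
    have hev : ∀ᶠ y in l, ‖Df v₁‖ - ε ≤ q y := by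
      filter_upwards [hkey ε hε] with y hy
      obtain ⟨hyS, hy2⟩ := hy
      have hyx : y ≠ x := by simpa using hyS.2
      have h1 : ‖Df v₁‖ ≤ ‖Df (‖y - x‖⁻¹ • (y - x))‖ :=
        isMinOn_iff.1 hv₁min _ (by simpa [mem_sphere_zero_iff_norm] using hdir y hyx)
      have h4 := abs_le.1 hy2
      linarith [h4.1]
    have := le_liminf_of_le hboundAbove.isCoboundedUnder_ge hev
    linarith
  have hliminf_le : liminf q l ≤ ‖Df v₁‖ := by
    refine le_of_forall_pos_le_add fun ε hε => ?_
    have hδpos : 0 < ε / (2 * (‖Df‖ + 1)) := by positivity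
    have hfr2 := (hfreq v₁ hv₁ _ hδpos).and_eventually (hkey (ε/2) (by positivity))
    have hfq : ∃ᶠ y in l, q y ≤ ‖Df v₁‖ + ε := by
      refine hfr2.mono ?_
      rintro y ⟨⟨hyx, hyδ⟩, hyS, hy2⟩
      have h1 := hδaux ε hε _ _ hyδ
      have h4 := abs_le.1 hy2
      have h5 := abs_le.1 h1
      linarith [h4.2, h5.2]
    exact liminf_le_of_frequently_le hfq hboundBelow
  refine ⟨le_antisymm hlimsup_le hlimsup_ge, ?_⟩
  rw [hm]
  exact le_antisymm hliminf_le hliminf_ge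
end
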